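/- arXiv:1807.03828 — 4 statements merged into one kernel-verified Lean document; each statement's English description precedes it below -/
import Mathlib

section
/- Let S(t) be the translation semigroup on BUC(ℝ⁺, X), M a closed subspace of BUC(ℝ⁺, X) invariant under all S(t), and Y the quotient space. For every f ∈ BUC(ℝ⁺, X), every t > 0, and every g ∈ M, define h(s) = g(s−t) for s ≥ t and h(s) = g(0) + f(s) − f(t) for 0 ≤ s < t. If h ∈ M, then ‖f − h‖_∞ = ‖S(t)f − g‖_∞; consequently (when M is admissible, so that h ∈ M always holds) ‖[f]‖ ≤ ‖[S(t)f]‖ in the quotient norm, and combined with contractivity, the induced semigroup S̄(t) consists of isometries of Y. -/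
open scoped NNReal
open BoundedContinuousFunction Filter MeasureTheory intervalIntegral Topology

noncomputable section

variable (X : Type*) [NormedAddCommGroup X] [NormedSpace ℂ X]

/-- `BUC(ℝ⁺, X)` as a submodule of the bounded continuous functions on `ℝ≥0`. -/
def BUCplus : Submodule ℂ (BoundedContinuousFunction ℝ≥0 X) where
  carrier := {f | UniformContinuous f}
  add_mem' {f g} hf hg := by
    show UniformContinuous ⇑(f + g)
    rw [BoundedContinuousFunction.coe_add]; exact hf.add hg
  zero_mem' := by
    show UniformContinuous ⇑(0 : BoundedContinuousFunction ℝ≥0 X)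
    rw [BoundedContinuousFunction.coe_zero]; exact uniformContinuous_const
  smul_mem' c f hf := by
    show UniformContinuous ⇑(c • f)
    rw [BoundedContinuousFunction.coe_smul]; exact hf.const_smul c

variable {X}

lemma uc_shift (t : ℝ≥0) : UniformContinuous fun ξ : ℝ≥0 => ξ + t := by
  have : Isometry fun ξ : ℝ≥0 => ξ + t :=
    Isometry.of_dist_eq fun a b => by simp [NNReal.dist_eq]
  exact this.uniformContinuous

def shiftMap (t : ℝ≥0) : C(ℝ≥0, ℝ≥0) := ⟨fun ξ => ξ + t, (uc_shift t).continuous⟩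

/-- The translation semigroup `(S(t)x)(ξ) = x(t + ξ)` on `BUC(ℝ⁺, X)`. -/
def Strans (t : ℝ≥0) : ↥(BUCplus X) →ₗ[ℂ] ↥(BUCplus X) where
  toFun f := ⟨f.1.compContinuous (shiftMap t), UniformContinuous.comp f.2 (uc_shift t)⟩
  map_add' f g := by apply Subtype.ext; ext ξ; rfl
  map_smul' c f := by apply Subtype.ext; ext ξ; rfl

/-- `f : ℝ → X` is almost periodic in Bohr's sense. -/
def AlmostPeriodic (f : ℝ → X) : Prop :=
  Continuous f ∧ ∀ ε > (0 : ℝ), ∃ l > (0 : ℝ), ∀ a : ℝ,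
    ∃ τ ∈ Set.Icc a (a + l), ∀ t : ℝ, ‖f (t + τ) - f t‖ ≤ ε

/-- The Bohr spectrum of `f` : the set of reals `λ` whose Fourier coefficient
`a(λ, f) = lim_{T→∞} (1/2T) ∫_{-T}^{T} e^{-iλt} f(t) dt` is different from `0`. -/
def BohrSpectrum (f : ℝ → X) : Set ℝ :=
  {l | ∃ a : X, a ≠ 0 ∧
    Tendsto (fun T : ℝ => (2 * T)⁻¹ •
      ∫ t in (-T)..T, (Complex.exp (-(Complex.I * l * t))) • f t) atTop (𝓝 a)}

/-- `AP⁺_Λ(X)` : restrictions to the half line of almost periodic functions with Bohr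
spectrum contained in `Λ`. -/
def APplusLam (Λ : Set ℝ) : Set ↥(BUCplus X) :=
  {h | ∃ f : ℝ → X, AlmostPeriodic f ∧ BohrSpectrum f ⊆ Λ ∧ ∀ s : ℝ≥0, h.1 s = f s}

/-- `C₀(X)` : the functions in `BUC(ℝ⁺, X)` vanishing at infinity. -/
def Czero : Set ↥(BUCplus X) :=
  {h | Tendsto (fun s : ℝ≥0 => h.1 s) atTop (𝓝 0)}

/-- A subspace `M` of `BUC(ℝ⁺, X)` is admissible if `M = AP⁺_Λ(X) ⊕ C₀(X)` for some
closed set `Λ ⊆ ℝ`. -/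
def IsAdmissible (M : Submodule ℂ ↥(BUCplus X)) : Prop :=
  ∃ Λ : Set ℝ, IsClosed Λ ∧
    ∀ h : ↥(BUCplus X), h ∈ M ↔ ∃ a ∈ APplusLam (X := X) Λ, ∃ b ∈ Czero (X := X), h = a + b

section MyAux

lemma AlmostPeriodic.exists_bound {F : ℝ → X} (hF : AlmostPeriodic F) :
    ∃ C : ℝ, 0 ≤ C ∧ ∀ r : ℝ, ‖F r‖ ≤ C := by
  obtain ⟨l, hl, H⟩ := hF.2 1 one_pos
  obtain ⟨C, hC⟩ := (isCompact_Icc (a := (0:ℝ)) (b := l)).exists_bound_of_continuousOn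
    hF.1.continuousOn
  refine ⟨max C 0 + 1, by positivity, fun r => ?_⟩
  obtain ⟨τ, hτ, hτ'⟩ := H (-r)
  have hmem : r + τ ∈ Set.Icc (0:ℝ) l := ⟨by linarith [hτ.1], by linarith [hτ.2]⟩
  have h1 : ‖F (r + τ) - F r‖ ≤ 1 := hτ' r
  have h2 : ‖F (r + τ)‖ ≤ C := hC _ hmem
  calc ‖F r‖ = ‖F (r + τ) - (F (r + τ) - F r)‖ := by rw [sub_sub_cancel]
    _ ≤ ‖F (r + τ)‖ + ‖F (r + τ) - F r‖ := norm_sub_le _ _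
    _ ≤ max C 0 + 1 := add_le_add (h2.trans (le_max_left _ _)) h1

lemma AlmostPeriodic.uniformContinuous {F : ℝ → X} (hF : AlmostPeriodic F) :
    UniformContinuous F := by
  rw [Metric.uniformContinuous_iff]
  intro ε hε
  obtain ⟨l, hl, H⟩ := hF.2 (ε/3) (by positivity)
  have hUC := (isCompact_Icc (a := (-1:ℝ)) (b := l + 1)).uniformContinuousOn_of_continuous
    hF.1.continuousOn
  rw [Metric.uniformContinuousOn_iff] at hUC
  obtain ⟨δ, hδ, hδ'⟩ := hUC (ε/3) (by positivity)
  refine ⟨min δ 1, by positivity, fun {a b} hab => ?_⟩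
  obtain ⟨τ, hτ, hτ'⟩ := H (-a)
  have ha : a + τ ∈ Set.Icc (-1:ℝ) (l+1) := ⟨by linarith [hτ.1], by linarith [hτ.2]⟩
  have hd1 : dist a b < 1 := lt_of_lt_of_le hab (min_le_right _ _)
  have hdδ : dist a b < δ := lt_of_lt_of_le hab (min_le_left _ _)
  rw [Real.dist_eq] at hd1
  obtain ⟨hd1a, hd1b⟩ := abs_lt.1 hd1
  have hb : b + τ ∈ Set.Icc (-1:ℝ) (l+1) := ⟨by linarith [hτ.1], by linarith [hτ.2]⟩
  have hmid : dist (F (a + τ)) (F (b + τ)) < ε/3 := by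
    apply hδ' _ ha _ hb
    rwa [Real.dist_eq, add_sub_add_right_eq_sub, ← Real.dist_eq]
  have hfirst : dist (F a) (F (a + τ)) ≤ ε/3 := by
    rw [dist_eq_norm, norm_sub_rev]; exact hτ' a
  have hlast : dist (F (b + τ)) (F b) ≤ ε/3 := by
    rw [dist_eq_norm]; exact hτ' b
  calc dist (F a) (F b) ≤ dist (F a) (F (a + τ)) + dist (F (a + τ)) (F (b + τ))
        + dist (F (b + τ)) (F b) := dist_triangle4 _ _ _ _
    _ < ε := by linarith

lemma AlmostPeriodic.comp_sub {F : ℝ → X} (hF : AlmostPeriodic F) (c : ℝ) :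
    AlmostPeriodic fun r => F (r - c) := by
  refine ⟨hF.1.comp (continuous_id.sub continuous_const), fun ε hε => ?_⟩
  obtain ⟨l, hl, H⟩ := hF.2 ε hε
  refine ⟨l, hl, fun a => ?_⟩
  obtain ⟨τ, hτ, hτ'⟩ := H a
  refine ⟨τ, hτ, fun u => ?_⟩
  show ‖F (u + τ - c) - F (u - c)‖ ≤ ε
  have h1 : u + τ - c = u - c + τ := by ring
  rw [h1]
  exact hτ' (u - c)

lemma AlmostPeriodic.bohrSpectrum_comp_sub {F : ℝ → X} (hF : AlmostPeriodic F) (c : ℝ) :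
    BohrSpectrum (fun r => F (r - c)) ⊆ BohrSpectrum F := by
  intro l hl
  obtain ⟨a, ha, hlim⟩ := hl
  obtain ⟨C, hC0, hC⟩ := hF.exists_bound
  set e : ℝ → ℂ := fun u => Complex.exp (-(Complex.I * l * u)) with he
  have hecont : Continuous e :=
    Complex.continuous_exp.comp (by fun_prop)
  have hG : Continuous fun u : ℝ => e u • F u := hecont.smul hF.1
  have hInt : ∀ p q : ℝ, IntervalIntegrable (fun u => e u • F u) MeasureTheory.volume p q :=
    fun p q => hG.intervalIntegrable p q
  have hnorm : ∀ u, ‖e u • F u‖ ≤ C := by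
    intro u
    rw [norm_smul]
    have h1 : ‖e u‖ = 1 := by
      simp [he, Complex.norm_exp]
    rw [h1, one_mul]; exact hC u
  have hmul : ∀ u v : ℝ, e (u + v) = e u * e v := by
    intro u v
    simp only [he]
    rw [← Complex.exp_add]
    congr 1
    push_cast
    ring
  have hinv : e (-c) * e c = 1 := by
    rw [← hmul]
    simp [he]
  have step1 : ∀ T : ℝ, (∫ s in (-T)..T, e s • F (s - c)) =
      e c • ∫ u in (-T - c)..(T - c), e u • F u := by
    intro T
    have key : ∀ x : ℝ, e (x + c) • F (x + c - c) = e c • (e x • F x) := by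
      intro x
      rw [hmul, add_sub_cancel_right, mul_comm, mul_smul]
    have h := intervalIntegral.integral_comp_add_right (a := -T - c) (b := T - c)
      (f := fun s => e s • F (s - c)) c
    simp only [key] at h
    have h2 : (-T - c + c) = -T := by ring
    have h3 : (T - c + c) = T := by ring
    rw [h2, h3] at h
    rw [← h]
    exact intervalIntegral.integral_smul (e c) _
  have step2 : ∀ T : ℝ, (∫ u in (-T)..T, e u • F u) =
      (∫ u in (-T - c)..(T - c), e u • F u) +
        ((∫ u in (T - c)..T, e u • F u) - ∫ u in (-T - c)..(-T), e u • F u) := by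
    intro T
    have h1 := intervalIntegral.integral_add_adjacent_intervals
      (hInt (-T - c) (T - c)) (hInt (T - c) T)
    have h2 := intervalIntegral.integral_add_adjacent_intervals
      (hInt (-T - c) (-T)) (hInt (-T) T)
    have h4 := eq_sub_of_add_eq' h2
    rw [h4, ← h1]
    abel
  have decomp : ∀ T : ℝ, (2*T)⁻¹ • (∫ s in (-T)..T, e s • F s) =
      e (-c) • ((2*T)⁻¹ • ∫ s in (-T)..T, e s • F (s - c)) +
      (2*T)⁻¹ • ((∫ u in (T - c)..T, e u • F u) - ∫ u in (-T - c)..(-T), e u • F u) := by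
    intro T
    rw [step2 T, smul_add]
    congr 1
    rw [step1 T, smul_comm (e (-c)), smul_smul, hinv, one_smul]
  have herr : Tendsto (fun T : ℝ => (2*T)⁻¹ •
      ((∫ u in (T - c)..T, e u • F u) - ∫ u in (-T - c)..(-T), e u • F u)) atTop (𝓝 0) := by
    apply squeeze_zero_norm' (a := fun T : ℝ => (2*T)⁻¹ * (2 * (C * |c|)))
    · filter_upwards [eventually_ge_atTop (1:ℝ)] with T hT
      have h2T : (0:ℝ) < 2*T := by linarith
      have hQ : ‖∫ u in (T - c)..T, e u • F u‖ ≤ C * |T - (T - c)| :=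
        intervalIntegral.norm_integral_le_of_norm_le_const (fun u _ => hnorm u)
      have hR : ‖∫ u in (-T - c)..(-T), e u • F u‖ ≤ C * |(-T) - (-T - c)| :=
        intervalIntegral.norm_integral_le_of_norm_le_const (fun u _ => hnorm u)
      have e1 : T - (T - c) = c := by ring
      have e2 : (-T) - (-T - c) = c := by ring
      rw [e1] at hQ
      rw [e2] at hR
      rw [norm_smul, Real.norm_eq_abs, abs_of_pos (inv_pos.2 h2T)]
      have hQR : ‖(∫ u in (T - c)..T, e u • F u) - ∫ u in (-T - c)..(-T), e u • F u‖
          ≤ 2 * (C * |c|) := by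
        calc ‖(∫ u in (T - c)..T, e u • F u) - ∫ u in (-T - c)..(-T), e u • F u‖
            ≤ ‖∫ u in (T - c)..T, e u • F u‖ + ‖∫ u in (-T - c)..(-T), e u • F u‖ :=
              norm_sub_le _ _
          _ ≤ 2 * (C * |c|) := by linarith
      exact mul_le_mul_of_nonneg_left hQR (le_of_lt (inv_pos.2 h2T))
    · have h1 : Tendsto (fun T : ℝ => (2*T)⁻¹) atTop (𝓝 0) := by
        apply Tendsto.inv_tendsto_atTop
        exact tendsto_id.const_mul_atTop two_pos
      simpa using h1.mul_const (2 * (C * |c|))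
  have hlim' : Tendsto (fun T : ℝ => (2*T)⁻¹ • ∫ s in (-T)..T, e s • F (s - c))
      atTop (𝓝 a) := hlim
  have hmain : Tendsto (fun T : ℝ => (2*T)⁻¹ • ∫ s in (-T)..T, e s • F s)
      atTop (𝓝 (e (-c) • a + 0)) :=
    ((hlim'.const_smul (e (-c))).add herr).congr (fun T => (decomp T).symm)
  rw [add_zero] at hmain
  exact ⟨e (-c) • a, smul_ne_zero (Complex.exp_ne_zero _) ha, hmain⟩

lemma mem_key (M : Submodule ℂ ↥(BUCplus X)) (hM : IsAdmissible M) (t : ℝ≥0)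
    (f g : ↥(BUCplus X)) (hg : g ∈ M) (h : ↥(BUCplus X))
    (hspec : ∀ s : ℝ≥0, (h.1 : ℝ≥0 → X) s =
      if t ≤ s then (g.1 : ℝ≥0 → X) (s - t)
      else (g.1 : ℝ≥0 → X) 0 + (f.1 : ℝ≥0 → X) s - (f.1 : ℝ≥0 → X) t) :
    h ∈ M := by
  obtain ⟨Λ, hΛ, hiff⟩ := hM
  obtain ⟨a, ⟨F, hFap, hFsp, hFa⟩, b, hb, hgab⟩ := (hiff g).1 hg
  obtain ⟨C, hC0, hC⟩ := hFap.exists_bound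
  have hF'ap : AlmostPeriodic fun r : ℝ => F (r - (t:ℝ)) := hFap.comp_sub (t:ℝ)
  have hF'sp := (hFap.bohrSpectrum_comp_sub (t:ℝ)).trans hFsp
  have hcoe : Isometry ((↑) : ℝ≥0 → ℝ) := fun _ _ => rfl
  have hucoe : UniformContinuous fun s : ℝ≥0 => F ((s:ℝ) - (t:ℝ)) :=
    hFap.uniformContinuous.comp (hcoe.uniformContinuous.sub uniformContinuous_const)
  set a' : ↥(BUCplus X) := ⟨BoundedContinuousFunction.ofNormedAddCommGroup
      (fun s : ℝ≥0 => F ((s:ℝ) - (t:ℝ))) hucoe.continuous C (fun s => hC _), hucoe⟩ with ha'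
  have ha'val : ∀ s : ℝ≥0, (a'.1 : ℝ≥0 → X) s = F ((s:ℝ) - (t:ℝ)) := fun s => rfl
  have hsub_atTop : Tendsto (fun s : ℝ≥0 => s - t) atTop atTop := by
    apply tendsto_atTop.2
    intro m
    filter_upwards [eventually_ge_atTop (m + t)] with s hs
    exact le_tsub_of_add_le_right hs
  have hb' : ((h - a' : ↥(BUCplus X)) ∈ Czero (X := X)) := by
    show Tendsto (fun s : ℝ≥0 => ((h - a' : ↥(BUCplus X)).1 : ℝ≥0 → X) s) atTop (𝓝 0)
    apply Tendsto.congr' _ ((hb.comp hsub_atTop :))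
    filter_upwards [eventually_ge_atTop t] with s hs
    have h1 : (h.1 : ℝ≥0 → X) s = (g.1 : ℝ≥0 → X) (s - t) := by rw [hspec s, if_pos hs]
    have h2 : (g.1 : ℝ≥0 → X) (s - t)
        = (a.1 : ℝ≥0 → X) (s - t) + (b.1 : ℝ≥0 → X) (s - t) := by rw [hgab]; rfl
    have h3 : (a.1 : ℝ≥0 → X) (s - t) = F ((s:ℝ) - (t:ℝ)) := by
      rw [hFa (s - t)]
      congr 1
      exact NNReal.coe_sub hs
    show (b.1 : ℝ≥0 → X) (s - t) = (h.1 : ℝ≥0 → X) s - (a'.1 : ℝ≥0 → X) s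
    rw [h1, h2, h3, ha'val]
    abel
  exact (hiff h).2 ⟨a', ⟨fun r => F (r - (t:ℝ)), hF'ap, hF'sp, fun s => rfl⟩,
    h - a', hb', by abel⟩

lemma norm_key (t : ℝ≥0) (f g h : ↥(BUCplus X))
    (hspec : ∀ s : ℝ≥0, (h.1 : ℝ≥0 → X) s =
      if t ≤ s then (g.1 : ℝ≥0 → X) (s - t)
      else (g.1 : ℝ≥0 → X) 0 + (f.1 : ℝ≥0 → X) s - (f.1 : ℝ≥0 → X) t) :
    ‖f - h‖ = ‖Strans t f - g‖ := by
  set u : BoundedContinuousFunction ℝ≥0 X := (f - h : ↥(BUCplus X)).1 with hu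
  set v : BoundedContinuousFunction ℝ≥0 X := (Strans t f - g : ↥(BUCplus X)).1 with hv
  have hvval : ∀ ξ : ℝ≥0, v ξ = (f.1 : ℝ≥0 → X) (ξ + t) - (g.1 : ℝ≥0 → X) ξ := fun ξ => rfl
  have huval : ∀ s : ℝ≥0, u s = (f.1 : ℝ≥0 → X) s - (h.1 : ℝ≥0 → X) s := fun s => rfl
  show ‖u‖ = ‖v‖
  apply le_antisymm
  · rw [BoundedContinuousFunction.norm_le (norm_nonneg v)]
    intro s
    by_cases hts : t ≤ s
    · have : u s = v (s - t) := by
        rw [huval, hvval, hspec s, if_pos hts, tsub_add_cancel_of_le hts]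
      rw [this]
      exact v.norm_coe_le_norm _
    · have : u s = v 0 := by
        rw [huval, hvval, hspec s, if_neg hts, zero_add]
        abel
      rw [this]
      exact v.norm_coe_le_norm _
  · rw [BoundedContinuousFunction.norm_le (norm_nonneg u)]
    intro ξ
    have : v ξ = u (ξ + t) := by
      rw [huval, hvval, hspec (ξ + t), if_pos le_add_self, add_tsub_cancel_right]
    rw [this]
    exact u.norm_coe_le_norm _

lemma Strans_mem {M : Submodule ℂ ↥(BUCplus X)} (hM : IsAdmissible M) (t : ℝ≥0)
    {m : ↥(BUCplus X)} (hm : m ∈ M) : Strans t m ∈ M := by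
  obtain ⟨Λ, hΛ, hiff⟩ := hM
  obtain ⟨a, ⟨F, hFap, hFsp, hFa⟩, b, hb, hab⟩ := (hiff m).1 hm
  have hadd : Tendsto (fun s : ℝ≥0 => s + t) atTop atTop := by
    apply tendsto_atTop.2
    intro m'
    filter_upwards [eventually_ge_atTop m'] with s hs
    exact hs.trans le_self_add
  refine (hiff _).2 ⟨Strans t a, ⟨fun r => F (r - (-(t:ℝ))), hFap.comp_sub _,
    (hFap.bohrSpectrum_comp_sub _).trans hFsp, fun s => ?_⟩, Strans t b, ?_, ?_⟩
  · show (a.1 : ℝ≥0 → X) (s + t) = F ((s:ℝ) - (-(t:ℝ)))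
    rw [hFa (s + t)]
    congr 1
    push_cast
    ring
  · show Tendsto (fun s : ℝ≥0 => (b.1 : ℝ≥0 → X) (s + t)) atTop (𝓝 0)
    exact hb.comp hadd
  · rw [hab, map_add]

lemma Strans_norm_le (t : ℝ≥0) (x : ↥(BUCplus X)) : ‖Strans t x‖ ≤ ‖x‖ := by
  have : ‖(Strans t x : ↥(BUCplus X)).1‖ ≤ ‖x.1‖ := by
    rw [BoundedContinuousFunction.norm_le (norm_nonneg _)]
    intro ξ
    exact x.1.norm_coe_le_norm (ξ + t)
  exact this

lemma exists_h (t : ℝ≥0) (f g : ↥(BUCplus X)) :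
    ∃ h : ↥(BUCplus X), ∀ s : ℝ≥0, (h.1 : ℝ≥0 → X) s =
      if t ≤ s then (g.1 : ℝ≥0 → X) (s - t)
      else (g.1 : ℝ≥0 → X) 0 + (f.1 : ℝ≥0 → X) s - (f.1 : ℝ≥0 → X) t := by
  have uc1 : UniformContinuous fun s : ℝ≥0 => s - t :=
    NNReal.lipschitzWith_sub.uniformContinuous.comp
      (uniformContinuous_id.prodMk uniformContinuous_const)
  have uc2 : UniformContinuous fun s : ℝ≥0 => s - (s - t) :=
    NNReal.lipschitzWith_sub.uniformContinuous.comp (uniformContinuous_id.prodMk uc1)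
  set hb : BoundedContinuousFunction ℝ≥0 X :=
    g.1.compContinuous ⟨fun s => s - t, uc1.continuous⟩ +
      f.1.compContinuous ⟨fun s => s - (s - t), uc2.continuous⟩ -
      BoundedContinuousFunction.const _ ((f.1 : ℝ≥0 → X) t) with hhb
  have hmem : hb ∈ BUCplus X := by
    show UniformContinuous (⇑hb)
    have : ⇑hb = fun s : ℝ≥0 => (g.1 : ℝ≥0 → X) (s - t)
        + (f.1 : ℝ≥0 → X) (s - (s - t)) - (f.1 : ℝ≥0 → X) t := rfl
    rw [this]
    exact ((g.2.comp uc1).add (f.2.comp uc2)).sub uniformContinuous_const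
  refine ⟨⟨hb, hmem⟩, fun s => ?_⟩
  show (g.1 : ℝ≥0 → X) (s - t) + (f.1 : ℝ≥0 → X) (s - (s - t)) - (f.1 : ℝ≥0 → X) t = _
  by_cases hts : t ≤ s
  · rw [if_pos hts, tsub_tsub_cancel_of_le hts]
    abel
  · push_neg at hts
    rw [if_neg (not_le.2 hts), tsub_eq_zero_of_le hts.le, tsub_zero]

end MyAux

/-- Let `M` be an admissible subspace of `BUC(ℝ⁺, X)` (it is invariant under all
translations `S(t)`), `f ∈ BUC(ℝ⁺, X)`, `t > 0`, `g ∈ M`, and let `h` be the function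
defined by `h(s) = g(s - t)` for `s ≥ t` and `h(s) = g(0) + f(s) - f(t)` for
`0 ≤ s < t`.  Then `h ∈ M`, `‖f - h‖_∞ = ‖S(t)f - g‖_∞`; consequently
`‖[f]‖ ≤ ‖[S(t)f]‖` in the quotient norm and, combined with contractivity, the
induced semigroup `S̄(t)` consists of isometries of `Y = BUC(ℝ⁺, X)/M`. -/
theorem induced_translation_isometric
    {X : Type*} [NormedAddCommGroup X] [NormedSpace ℂ X]
    (M : Submodule ℂ ↥(BUCplus X)) (hM : IsAdmissible M)
    (t : ℝ≥0) (ht : 0 < t) (f g : ↥(BUCplus X)) (hg : g ∈ M)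
    (h : ↥(BUCplus X))
    (hspec : ∀ s : ℝ≥0, (h.1 : ℝ≥0 → X) s =
      if t ≤ s then (g.1 : ℝ≥0 → X) (s - t)
      else (g.1 : ℝ≥0 → X) 0 + (f.1 : ℝ≥0 → X) s - (f.1 : ℝ≥0 → X) t) :
    h ∈ M ∧
    ‖f - h‖ = ‖Strans t f - g‖ ∧
    ‖(Submodule.Quotient.mk f : ↥(BUCplus X) ⧸ M)‖ ≤
      ‖(Submodule.Quotient.mk (Strans t f) : ↥(BUCplus X) ⧸ M)‖ ∧
    ‖(Submodule.Quotient.mk (Strans t f) : ↥(BUCplus X) ⧸ M)‖ =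
      ‖(Submodule.Quotient.mk f : ↥(BUCplus X) ⧸ M)‖ := by
  have hmem := mem_key M hM t f g hg h hspec
  have hnorm := norm_key t f g h hspec
  have part3 : ‖(Submodule.Quotient.mk f : ↥(BUCplus X) ⧸ M)‖ ≤
      ‖(Submodule.Quotient.mk (Strans t f) : ↥(BUCplus X) ⧸ M)‖ := by
    refine le_of_forall_pos_le_add fun ε hε => ?_
    obtain ⟨m, hmk, hm⟩ :=
      Submodule.Quotient.norm_mk_lt (Submodule.Quotient.mk (Strans t f) : ↥(BUCplus X) ⧸ M) hε
    have hg' : Strans t f - m ∈ M := by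
      have := (Submodule.Quotient.eq M).1 hmk
      simpa using M.neg_mem this
    obtain ⟨h', hspec'⟩ := exists_h t f (Strans t f - m)
    have hmem' := mem_key M hM t f (Strans t f - m) hg' h' hspec'
    have hnorm' := norm_key t f (Strans t f - m) h' hspec'
    have e1 : (Submodule.Quotient.mk (f - h') : ↥(BUCplus X) ⧸ M) = Submodule.Quotient.mk f := by
      rw [Submodule.Quotient.eq]
      simpa using M.neg_mem hmem'
    calc ‖(Submodule.Quotient.mk f : ↥(BUCplus X) ⧸ M)‖
        = ‖(Submodule.Quotient.mk (f - h') : ↥(BUCplus X) ⧸ M)‖ := by rw [e1]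
      _ ≤ ‖f - h'‖ := Submodule.Quotient.norm_mk_le (S := M) _
      _ = ‖Strans t f - (Strans t f - m)‖ := hnorm'
      _ = ‖m‖ := by rw [sub_sub_cancel]
      _ ≤ ‖(Submodule.Quotient.mk (Strans t f) : ↥(BUCplus X) ⧸ M)‖ + ε := hm.le
  have part4 : ‖(Submodule.Quotient.mk (Strans t f) : ↥(BUCplus X) ⧸ M)‖ ≤
      ‖(Submodule.Quotient.mk f : ↥(BUCplus X) ⧸ M)‖ := by
    refine le_of_forall_pos_le_add fun ε hε => ?_
    obtain ⟨m, hmk, hm⟩ :=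
      Submodule.Quotient.norm_mk_lt (Submodule.Quotient.mk f : ↥(BUCplus X) ⧸ M) hε
    have hfm : f - m ∈ M := by
      have := (Submodule.Quotient.eq M).1 hmk
      simpa using M.neg_mem this
    have hS : Strans t f - Strans t m ∈ M := by
      rw [← map_sub]
      exact Strans_mem hM t hfm
    have e1 : (Submodule.Quotient.mk (Strans t f) : ↥(BUCplus X) ⧸ M) =
        Submodule.Quotient.mk (Strans t m) := (Submodule.Quotient.eq M).2 hS
    calc ‖(Submodule.Quotient.mk (Strans t f) : ↥(BUCplus X) ⧸ M)‖
        = ‖(Submodule.Quotient.mk (Strans t m) : ↥(BUCplus X) ⧸ M)‖ := by rw [e1]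
      _ ≤ ‖Strans t m‖ := Submodule.Quotient.norm_mk_le (S := M) _
      _ ≤ ‖m‖ := Strans_norm_le t m
      _ ≤ ‖(Submodule.Quotient.mk f : ↥(BUCplus X) ⧸ M)‖ + ε := hm.le
  exact ⟨hmem, hnorm, part3, le_antisymm part4 part3⟩

end
end

section
/- Let T be an invertible isometry of a complex Banach space Y and y ∈ Y. If ξ₀ on the unit circle is an isolated singular point of the analytic function λ ↦ R(λ, T)y, then ξ₀ is either a removable singularity or a pole of order one. -/
open Complex Metric Set Function Filter Topology

lemma center_bound_aux {Y : Type*} [NormedAddCommGroup Y] [NormedSpace ℂ Y] [CompleteSpace Y]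
    (F : ℂ → Y) (v₀ : ℂ) (ρ b : ℝ) (hρ : 0 < ρ) (hv₀ : v₀ ≠ 0)
    (hF : ∀ x ∈ closedBall v₀ ρ, DifferentiableAt ℂ F x)
    (hB : ∀ z ∈ sphere v₀ ρ,
      |‖z‖ - 1| * (‖z‖ + 1) * ‖F z‖ ≤ b) :
    ‖F v₀‖ ≤ b / (‖v₀‖ * ρ) := by
  set n₀ : ℝ := ‖v₀‖ with hn₀def
  have hn₀pos : 0 < n₀ := by
    simpa [hn₀def] using (norm_pos_iff.mpr hv₀)
  -- the quadratic kernel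
  set q : ℂ → ℂ := fun z =>
    ((n₀^2 : ℝ) : ℂ) * (z - v₀)^2 + ((n₀^2 + ρ^2 - 1 : ℝ) : ℂ) * v₀ * (z - v₀)
      + ((ρ^2 : ℝ) : ℂ) * v₀^2 with hqdef
  have h2 : v₀ * (starRingEnd ℂ) v₀ = ((n₀^2 : ℝ) : ℂ) := by
    rw [Complex.mul_conj]
    norm_cast
    rw [← Complex.sq_norm]
  -- key algebraic identity on the circle of radius ρ
  have hkey : ∀ z : ℂ, ‖z - v₀‖ = ρ →
      q z = v₀ * (z - v₀) * (z * (starRingEnd ℂ) z - 1) := by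
    intro z hz
    have hnsq : Complex.normSq (z - v₀) = ρ^2 := by
      rw [← Complex.sq_norm, hz]
    have h1 : (z - v₀) * (starRingEnd ℂ) (z - v₀) = ((ρ^2 : ℝ) : ℂ) := by
      rw [Complex.mul_conj, hnsq]
    rw [map_sub] at h1
    simp only [hqdef]
    push_cast
    push_cast at h1 h2
    linear_combination (-(z*v₀)) * h1 + (-(z*(z-v₀))) * h2
  -- modulus of the kernel on the circle
  have habsq : ∀ z : ℂ, ‖z - v₀‖ = ρ →
      ‖q z‖ = n₀ * ρ * (|‖z‖ - 1| * (‖z‖ + 1)) := by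
    intro z hz
    rw [hkey z hz]
    have h3 : z * (starRingEnd ℂ) z - 1 = ((Complex.normSq z - 1 : ℝ) : ℂ) := by
      rw [Complex.mul_conj]; push_cast; ring
    rw [norm_mul, norm_mul, h3, Complex.norm_real, Real.norm_eq_abs, hz]
    have hfac : Complex.normSq z - 1 = (‖z‖ - 1) * (‖z‖ + 1) := by
      rw [← Complex.sq_norm]; ring
    rw [hfac, abs_mul, abs_of_pos (by positivity : (0:ℝ) < ‖z‖ + 1)]
    try ring
  -- value at the center
  have hqv₀ : ‖q v₀‖ = ρ^2 * n₀^2 := by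
    have h4 : q v₀ = ((ρ^2 : ℝ) : ℂ) * v₀^2 := by simp [hqdef]
    rw [h4, norm_mul, norm_pow, Complex.norm_real, Real.norm_eq_abs, abs_of_pos (by positivity)]
    try rfl
  -- Cauchy integral formula for `q • F`
  have hqd : Differentiable ℂ q := by
    simp only [hqdef]
    fun_prop
  have hΦd : ∀ x ∈ closedBall v₀ ρ, DifferentiableAt ℂ (fun z => q z • F z) x :=
    fun x hx => (hqd x).smul (hF x hx)
  have hCauchy : (∮ z in C(v₀, ρ), (z - v₀)⁻¹ • (q z • F z))
      = (2 * Real.pi * Complex.I : ℂ) • (q v₀ • F v₀) := by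
    refine Complex.circleIntegral_sub_inv_smul_of_differentiable_on_off_countable
      (s := ∅) countable_empty (mem_ball_self hρ) ?_ ?_
    · exact fun x hx => (hΦd x hx).continuousAt.continuousWithinAt
    · exact fun x hx => hΦd x (ball_subset_closedBall hx.1)
  -- bound the integral
  have hb0 : 0 ≤ b := by
    have : v₀ + ρ ∈ sphere v₀ ρ := by
      simp [Complex.dist_eq, abs_of_pos hρ]
    refine le_trans ?_ (hB _ this)
    positivity
  have hbound : ‖(2 * Real.pi * Complex.I : ℂ) • (q v₀ • F v₀)‖
      ≤ 2 * Real.pi * ρ * (n₀ * b) := by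
    rw [← hCauchy]
    refine circleIntegral.norm_integral_le_of_norm_le_const hρ.le ?_
    intro z hz
    have hz' : ‖z - v₀‖ = ρ := by
      simpa [Complex.dist_eq] using hz
    rw [norm_smul, norm_smul]
    have hzinv : ‖(z - v₀)⁻¹‖ = ρ⁻¹ := by
      rw [norm_inv, hz']
    rw [hzinv, habsq z hz']
    have := hB z hz
    calc ρ⁻¹ * (n₀ * ρ * (|‖z‖ - 1| * (‖z‖ + 1)) * ‖F z‖)
        = n₀ * (|‖z‖ - 1| * (‖z‖ + 1) * ‖F z‖) := by
          field_simp
          try ring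
      _ ≤ n₀ * b := by
          exact mul_le_mul_of_nonneg_left (hB z hz) hn₀pos.le
  have hlhs : ‖(2 * Real.pi * Complex.I : ℂ) • (q v₀ • F v₀)‖
      = 2 * Real.pi * (ρ^2 * n₀^2 * ‖F v₀‖) := by
    rw [norm_smul, norm_smul, hqv₀]
    simp only [norm_mul, Complex.norm_two, Complex.norm_real, Real.norm_eq_abs, Complex.norm_I,
      abs_of_pos Real.pi_pos]
    ring
  rw [hlhs] at hbound
  have h7 : ρ^2*n₀^2*‖F v₀‖ ≤ ρ*(n₀*b) := by nlinarith [Real.pi_pos]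
  have hpos : 0 < n₀ * ρ := mul_pos hn₀pos hρ
  rw [le_div_iff₀ hpos]
  nlinarith [h7, hpos, norm_nonneg (F v₀)]

/-- Gelfand-type lemma: let `T` be an invertible isometry of a complex Banach space `Y`,
`y ∈ Y`, and let `ξ₀` on the unit circle be an isolated singular point of the analytic
function `λ ↦ R(λ, T) y`, i.e. `g` is analytic on `U \ {ξ₀}` for some open neighborhood
`U` of `ξ₀` and coincides there with the local resolvent `R(λ, T) y` (characterized by
`(λI - T) g(λ) = y`) whenever `|λ| ≠ 1`.  Then `ξ₀` is either a removable singular point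
or a pole of first order; equivalently, `λ ↦ (λ - ξ₀) g(λ)` extends analytically to `U`. -/
theorem isolated_singularity_of_local_resolvent_pole_order_one
    {Y : Type*} [NormedAddCommGroup Y] [NormedSpace ℂ Y] [CompleteSpace Y]
    (T : Y ≃ₗᵢ[ℂ] Y) (y : Y) (ξ₀ : ℂ) (hξ₀ : ‖ξ₀‖ = 1)
    (U : Set ℂ) (hU : IsOpen U) (hξU : ξ₀ ∈ U)
    (g : ℂ → Y) (hg : DifferentiableOn ℂ g (U \ {ξ₀}))
    (hres : ∀ l ∈ U \ {ξ₀}, ‖l‖ ≠ 1 → l • g l - T (g l) = y) :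
    ∃ h : ℂ → Y, DifferentiableOn ℂ h U ∧ ∀ l ∈ U \ {ξ₀}, h l = (l - ξ₀) • g l := by
  -- the basic resolvent norm estimate coming from `T` being an isometry
  have hGB : ∀ z ∈ U \ {ξ₀}, |‖z‖ - 1| * ‖g z‖ ≤ ‖y‖ := by
    intro z hz
    rcases eq_or_ne (‖z‖) 1 with h1 | h1
    · simp only [h1, sub_self, abs_zero, zero_mul]
      exact norm_nonneg y
    · have heq := hres z hz h1
      have hkey : |‖z‖ - 1| * ‖g z‖ = |‖z • g z‖ - ‖T (g z)‖| := by
        rw [norm_smul, T.norm_map, ← sub_one_mul, abs_mul,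
          _root_.abs_of_nonneg (norm_nonneg (g z))]
      rw [hkey, ← heq]
      exact abs_norm_sub_norm_le _ _
  set F : ℂ → Y := fun l => (l - ξ₀) • g l with hFdef
  have hFd : DifferentiableOn ℂ F (U \ {ξ₀}) :=
    (differentiableOn_id.sub (differentiableOn_const _)).smul hg
  have hUopen : IsOpen (U \ {ξ₀}) := hU.sdiff isClosed_singleton
  -- choice of a small radius
  obtain ⟨ε, hε, hball⟩ := Metric.isOpen_iff.mp hU ξ₀ hξU
  set R : ℝ := min (ε/4) 4⁻¹ with hRdef
  have hRpos : 0 < R := by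
    apply lt_min (by linarith) (by norm_num)
  have hR4 : R ≤ 4⁻¹ := min_le_right _ _
  have hRU : ball ξ₀ (2*R) ⊆ U := by
    intro z hz
    apply hball
    have h2R : 2*R ≤ ε/2 := by
      have := min_le_left (ε/4) (4⁻¹ : ℝ)
      simp only [← hRdef] at this
      linarith
    exact lt_of_lt_of_le (mem_ball.mp hz) (by linarith)
  -- main boundedness estimate
  have key : ∀ v₀ ∈ ball ξ₀ R \ {ξ₀}, ‖F v₀‖ ≤ 12 * ‖y‖ := by
    rintro v₀ ⟨hv₀b, hv₀ne⟩
    have hv₀ne' : v₀ ≠ ξ₀ := hv₀ne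
    set r : ℝ := ‖v₀ - ξ₀‖ with hrdef
    have hr0 : 0 < r := by
      simpa [hrdef] using norm_pos_iff.mpr (sub_ne_zero.mpr hv₀ne')
    have hrR : r < R := by
      have := mem_ball.mp hv₀b
      rwa [Complex.dist_eq] at this
    have hrquarter : r < 4⁻¹ := lt_of_lt_of_le hrR hR4
    -- the closed disc of radius r/2 around v₀ is inside U \ {ξ₀}
    have hsub : closedBall v₀ (r/2) ⊆ U \ {ξ₀} := by
      intro z hz
      have hd : ‖z - v₀‖ ≤ r/2 := by
        have := mem_closedBall.mp hz
        rwa [Complex.dist_eq] at this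
      constructor
      · apply hRU
        rw [mem_ball, Complex.dist_eq]
        have : ‖z - ξ₀‖ ≤ ‖z - v₀‖ + ‖v₀ - ξ₀‖ := by
          simpa using norm_sub_le_norm_sub_add_norm_sub z v₀ ξ₀
        calc ‖z - ξ₀‖ ≤ r/2 + r := by linarith
          _ < 2*R := by linarith
      · simp only [mem_singleton_iff]
        intro hzξ
        subst hzξ
        have hre : ‖z - v₀‖ = r := by
          rw [hrdef, norm_sub_rev]
        rw [hre] at hd
        linarith
    -- the center is away from 0
    have hv₀0 : v₀ ≠ 0 := by
      intro h0
      have : ‖v₀ - ξ₀‖ = 1 := by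
        rw [h0, zero_sub, norm_neg, hξ₀]
      rw [← hrdef] at this
      linarith [this ▸ hrquarter]
    have hn₀ge : (3:ℝ)/4 ≤ ‖v₀‖ := by
      have htri : ‖ξ₀‖ ≤ ‖ξ₀ - v₀‖ + ‖v₀‖ := by
        simpa using norm_sub_le_norm_sub_add_norm_sub ξ₀ v₀ 0
      have : ‖ξ₀ - v₀‖ = r := by rw [hrdef, norm_sub_rev]
      rw [this, hξ₀] at htri
      linarith
    -- apply the key estimate
    have hmain := center_bound_aux F v₀ (r/2) ((9/2) * r * ‖y‖) (by linarith) hv₀0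
      (fun x hx => hFd.differentiableAt (hUopen.mem_nhds (hsub hx)))
      ?_
    · refine le_trans hmain ?_
      rw [div_le_iff₀ (by positivity)]
      nlinarith [mul_le_mul_of_nonneg_right hn₀ge (mul_nonneg hr0.le (norm_nonneg y))]
    · -- the bound on the circle of radius r/2
      intro z hz
      have hz' : ‖z - v₀‖ = r/2 := by
        have := mem_sphere.mp hz
        rwa [Complex.dist_eq] at this
      have hzmem : z ∈ U \ {ξ₀} := hsub (sphere_subset_closedBall hz)
      have hzd : ‖z - ξ₀‖ ≤ 3/2 * r := by
        have htri : ‖z - ξ₀‖ ≤ ‖z - v₀‖ + ‖v₀ - ξ₀‖ := by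
          simpa using norm_sub_le_norm_sub_add_norm_sub z v₀ ξ₀
        rw [hz', ← hrdef] at htri
        linarith
      have hza : ‖z‖ + 1 ≤ 3 := by
        have htri : ‖z‖ ≤ ‖z - ξ₀‖ + ‖ξ₀‖ := by
          simpa using norm_sub_le_norm_sub_add_norm_sub z ξ₀ 0
        rw [hξ₀] at htri
        linarith
      have hFz : ‖F z‖ = ‖z - ξ₀‖ * ‖g z‖ := by
        rw [hFdef]
        simp only [norm_smul]
      have hgb := hGB z hzmem
      calc |‖z‖ - 1| * (‖z‖ + 1) * ‖F z‖
          = (‖z‖ + 1) * ‖z - ξ₀‖ * (|‖z‖ - 1| * ‖g z‖) := by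
            rw [hFz]; ring
        _ ≤ (‖z‖ + 1) * ‖z - ξ₀‖ * ‖y‖ := by
            apply mul_le_mul_of_nonneg_left hgb
            positivity
        _ ≤ 3 * (3/2 * r) * ‖y‖ := by
            apply mul_le_mul_of_nonneg_right ?_ (norm_nonneg y)
            apply mul_le_mul hza hzd (norm_nonneg _) (by norm_num)
        _ = (9/2) * r * ‖y‖ := by ring
  -- removable singularity and gluing
  have hbdd : BddAbove (norm ∘ F '' (ball ξ₀ R \ {ξ₀})) := by
    refine ⟨12 * ‖y‖, ?_⟩
    rintro x ⟨z, hz, rfl⟩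
    exact key z hz
  have hballsub : ball ξ₀ R \ {ξ₀} ⊆ U \ {ξ₀} := by
    intro z hz
    refine ⟨hRU (ball_subset_ball (by linarith) hz.1), hz.2⟩
  have hrem := Complex.differentiableOn_update_limUnder_of_bddAbove
    (ball_mem_nhds ξ₀ hRpos) (hFd.mono hballsub) hbdd
  refine ⟨Function.update F ξ₀ (limUnder (𝓝[≠] ξ₀) F), ?_, ?_⟩
  · intro x hx
    rcases eq_or_ne x ξ₀ with rfl | hxne
    · exact (hrem.differentiableAt (ball_mem_nhds _ hRpos)).differentiableWithinAt
    · have hx' : x ∈ U \ {ξ₀} := ⟨hx, hxne⟩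
      have hFat : DifferentiableAt ℂ F x := hFd.differentiableAt (hUopen.mem_nhds hx')
      have hev : Function.update F ξ₀ (limUnder (𝓝[≠] ξ₀) F) =ᶠ[𝓝 x] F := by
        filter_upwards [isOpen_compl_singleton.mem_nhds (by simpa using hxne)] with z hz
        exact Function.update_of_ne hz _ _
      exact (hFat.congr_of_eventuallyEq hev).differentiableWithinAt
  · intro l hl
    exact Function.update_of_ne hl.2 _ _
end

section
/- Let T be an invertible isometry of a complex Banach space Y, y ∈ Y, and ξ₀ ∈ Γ an isolated singular point of λ ↦ R(λ, T)y. If lim_{s↓1} (sξ₀ − ξ₀) R(sξ₀, T)y = 0 (radial limit from outside the unit circle), then ξ₀ is a removable singularity of R(λ, T)y. -/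
open Filter Topology
open Metric Set

/-- Let `T` be an invertible isometry of a complex Banach space `Y`, `y ∈ Y`, and let
`ξ₀` on the unit circle be an isolated singular point of the analytic function
`λ ↦ R(λ, T) y` (represented by `g`, analytic on `U \ {ξ₀}` and satisfying
`(λI - T) g(λ) = y` for `|λ| ≠ 1`).  If the radial limit condition
`lim_{s ↓ 1} (sξ₀ - ξ₀) R(sξ₀, T) y = 0` holds, then `ξ₀` is a removable singularity,
i.e. `g` extends analytically to all of `U`. -/
theorem removable_singularity_of_radial_limit
    {Y : Type*} [NormedAddCommGroup Y] [NormedSpace ℂ Y] [CompleteSpace Y]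
    (T : Y ≃ₗᵢ[ℂ] Y) (y : Y) (ξ₀ : ℂ) (hξ₀ : ‖ξ₀‖ = 1)
    (U : Set ℂ) (hU : IsOpen U) (hξU : ξ₀ ∈ U)
    (g : ℂ → Y) (hg : DifferentiableOn ℂ g (U \ {ξ₀}))
    (hres : ∀ l ∈ U \ {ξ₀}, ‖l‖ ≠ 1 → l • g l - T (g l) = y)
    (herg : Tendsto (fun s : ℝ => ((s : ℂ) * ξ₀ - ξ₀) • g ((s : ℂ) * ξ₀))
      (𝓝[>] (1 : ℝ)) (𝓝 0)) :
    ∃ h : ℂ → Y, DifferentiableOn ℂ h U ∧ ∀ l ∈ U \ {ξ₀}, h l = g l := by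
  have hξ0 : ξ₀ ≠ 0 := by
    intro h; rw [h] at hξ₀; simp at hξ₀
  -- the basic isometry bound `||z| - 1| * ‖g z‖ ≤ ‖y‖`
  have hbound : ∀ z ∈ U \ {ξ₀}, |‖z‖ - 1| * ‖g z‖ ≤ ‖y‖ := by
    intro z hz
    rcases eq_or_ne (‖z‖) 1 with h1 | h1
    · simp [h1]
    · have hy := hres z hz h1
      have h2 : |‖z • g z‖ - ‖T (g z)‖| ≤ ‖z • g z - T (g z)‖ := abs_norm_sub_norm_le _ _
      rw [hy, norm_smul, T.norm_map] at h2
      calc |‖z‖ - 1| * ‖g z‖ = |(‖z‖ - 1) * ‖g z‖| := by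
            rw [abs_mul, _root_.abs_of_nonneg (norm_nonneg _)]
        _ = |‖z‖ * ‖g z‖ - ‖g z‖| := by ring_nf
        _ ≤ ‖y‖ := h2
  obtain ⟨r, hr0, hrU⟩ := Metric.isOpen_iff.1 hU ξ₀ hξU
  set r₁ : ℝ := min (r / 2) (1 / 8) with hr₁def
  have hr₁0 : 0 < r₁ := lt_min (by linarith) (by norm_num)
  have hr₁r : r₁ ≤ r / 2 := min_le_left _ _
  have hr₁8 : r₁ ≤ 1 / 8 := min_le_right _ _
  have hBU : Metric.ball ξ₀ r₁ ⊆ U := fun z hz =>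
    hrU (mem_ball.2 (lt_of_lt_of_le (mem_ball.1 hz) (by linarith)))
  -- Key pointwise estimate: simple pole bound.
  have key : ∀ w ∈ Metric.ball ξ₀ r₁ \ {ξ₀}, ‖(w - ξ₀) • g w‖ ≤ 12 * ‖y‖ := by
    rintro w ⟨hwball, hwne⟩
    have hwne' : w ≠ ξ₀ := hwne
    set d : ℝ := ‖w - ξ₀‖ with hd
    have hd0 : 0 < d := by
      rw [hd]
      exact norm_pos_iff.mpr (sub_ne_zero.2 hwne')
    have hdr : d < r₁ := by
      have := mem_ball.1 hwball
      rwa [Complex.dist_eq] at this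
    set s : ℝ := d / 2 with hs
    have hs0 : 0 < s := by positivity
    -- |w| is close to 1
    have hwabs : 7 / 8 ≤ ‖w‖ := by
      have h1 : ‖ξ₀‖ ≤ ‖ξ₀ - w‖ + ‖w‖ := by
        simpa using norm_sub_le_norm_sub_add_norm_sub ξ₀ w 0
      rw [norm_sub_rev ξ₀ w, ← hd, hξ₀] at h1
      linarith [hdr.le.trans hr₁8]
    -- the closed ball around w of radius s avoids ξ₀ and stays in U
    have hsub : Metric.closedBall w s ⊆ U \ {ξ₀} := by
      intro ζ hζ
      rw [mem_closedBall, Complex.dist_eq] at hζ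
      have htri : ‖ζ - ξ₀‖ ≤ ‖ζ - w‖ + d := by
        simpa [hd] using norm_sub_le_norm_sub_add_norm_sub ζ w ξ₀
      have htri2 : d ≤ ‖w - ζ‖ + ‖ζ - ξ₀‖ := by
        simpa [hd] using norm_sub_le_norm_sub_add_norm_sub w ζ ξ₀
      rw [norm_sub_rev w ζ] at htri2
      constructor
      · apply hrU
        rw [mem_ball, Complex.dist_eq]
        have : ‖ζ - ξ₀‖ ≤ 3 / 2 * d := by linarith
        have h2 : (3:ℝ)/2 * d < 3/2 * r₁ := by linarith
        calc ‖ζ - ξ₀‖ ≤ 3 / 2 * d := this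
          _ < r := by
            have := hr₁r
            linarith
      · intro hmem
        rw [mem_singleton_iff] at hmem
        have : ‖ζ - ξ₀‖ = 0 := by rw [hmem]; simp
        rw [this] at htri2
        linarith
    -- the modified Cauchy kernel polynomial
    set Q : ℂ → ℂ := fun ζ =>
      (starRingEnd ℂ) w * ζ ^ 2 - (1 + w * (starRingEnd ℂ) w - (s : ℂ) ^ 2) * ζ + w with hQ
    have hQdiff : Differentiable ℂ Q := by
      apply Differentiable.add
      apply Differentiable.sub
      · exact (differentiable_const _).mul (differentiable_pow 2)
      · exact (differentiable_const _).mul differentiable_id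
      · exact differentiable_const _
    set f : ℂ → Y := fun ζ => Q ζ • g ζ with hf
    have hfd : DiffContOnCl ℂ f (Metric.ball w s) := by
      apply DifferentiableOn.diffContOnCl_ball
        ((hQdiff.differentiableOn).smul (hg.mono hsub)) (subset_refl _)
    have hCauchy := hfd.circleIntegral_sub_inv_smul (mem_ball_self hs0)
    -- bound on the sphere
    have hsphere : ∀ ζ ∈ sphere w s, ‖(ζ - w)⁻¹ • f ζ‖ ≤ 3 * ‖y‖ := by
      intro ζ hζ
      have hζs : ‖ζ - w‖ = s := by
        rw [mem_sphere, Complex.dist_eq] at hζ; exact hζ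
      have hζU : ζ ∈ U \ {ξ₀} := hsub (sphere_subset_closedBall hζ)
      have hconj : (ζ - w) * ((starRingEnd ℂ) ζ - (starRingEnd ℂ) w) = (s : ℂ) ^ 2 := by
        have h1 := Complex.mul_conj (ζ - w)
        rw [map_sub] at h1
        rw [h1, Complex.normSq_eq_norm_sq, hζs]
        push_cast; ring
      have hQeq : Q ζ = (ζ * (starRingEnd ℂ) ζ - 1) * (ζ - w) := by
        rw [hQ]; linear_combination -ζ * hconj
      have habsQ : ‖Q ζ‖ = |Complex.normSq ζ - 1| * s := by
        rw [hQeq, norm_mul, hζs, Complex.mul_conj]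
        congr 1
        rw [show ((Complex.normSq ζ : ℂ) - 1) = ((Complex.normSq ζ - 1 : ℝ) : ℂ) by push_cast; ring]
        rw [Complex.norm_real, Real.norm_eq_abs]
      -- |ζ| ≤ 2
      have hζabs : ‖ζ‖ ≤ 2 := by
        have h1 : ‖ζ‖ ≤ ‖ζ - w‖ + ‖w‖ := by
          simpa using norm_sub_le_norm_sub_add_norm_sub ζ w 0
        have h2 : ‖w‖ ≤ ‖w - ξ₀‖ + ‖ξ₀‖ := by
          simpa using norm_sub_le_norm_sub_add_norm_sub w ξ₀ 0
        rw [hξ₀, ← hd] at h2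
        have : d ≤ 1 / 8 := hdr.le.trans hr₁8
        rw [hζs] at h1
        have : s ≤ 1 / 16 := by rw [hs]; linarith
        linarith
      have hfactor : |Complex.normSq ζ - 1| = |‖ζ‖ - 1| * (‖ζ‖ + 1) := by
        rw [← Complex.sq_norm]
        rw [show (‖ζ‖) ^ 2 - 1 = (‖ζ‖ - 1) * (‖ζ‖ + 1) by ring,
          abs_mul, _root_.abs_of_nonneg (by positivity : (0:ℝ) ≤ ‖ζ‖ + 1)]
      rw [hf, norm_smul, norm_smul, norm_inv, hζs,
        habsQ, hfactor]
      have hb := hbound ζ hζU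
      calc s⁻¹ * (|‖ζ‖ - 1| * (‖ζ‖ + 1) * s * ‖g ζ‖)
          = (‖ζ‖ + 1) * (|‖ζ‖ - 1| * ‖g ζ‖) := by
            field_simp
        _ ≤ 3 * ‖y‖ := by
            apply mul_le_mul (by linarith) hb
              (mul_nonneg (abs_nonneg _) (norm_nonneg _)) (by norm_num)
    have hint : ‖∮ z in C(w, s), (z - w)⁻¹ • f z‖ ≤ 2 * Real.pi * s * (3 * ‖y‖) :=
      circleIntegral.norm_integral_le_of_norm_le_const hs0.le hsphere
    rw [hCauchy] at hint
    have hQw : Q w = w * (s : ℂ) ^ 2 := by rw [hQ]; ring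
    have hnorm2pi : ‖(2 * (Real.pi : ℂ) * Complex.I)‖ = 2 * Real.pi := by
      simp [Complex.norm_real, _root_.abs_of_pos Real.pi_pos]
    rw [norm_smul, hnorm2pi] at hint
    have hfw : ‖f w‖ = ‖w‖ * s ^ 2 * ‖g w‖ := by
      show ‖Q w • g w‖ = _
      rw [norm_smul, hQw, norm_mul, norm_pow, Complex.norm_real, Real.norm_eq_abs,
        _root_.abs_of_pos hs0]
    rw [hfw] at hint
    -- now extract the bound
    have hpi : (0:ℝ) < 2 * Real.pi := Real.two_pi_pos
    have hint2 : ‖w‖ * s ^ 2 * ‖g w‖ ≤ s * (3 * ‖y‖) := by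
      by_contra hcon
      push_neg at hcon
      have := mul_lt_mul_of_pos_left hcon hpi
      linarith [hint]
    have hgw : s * (s * ‖g w‖) ≤ s * (6 * ‖y‖) := by
      have hmono := mul_le_mul_of_nonneg_right hwabs
        (by positivity : (0:ℝ) ≤ s ^ 2 * ‖g w‖)
      nlinarith [hint2, norm_nonneg y, hs0.le]
    have hgw2 : s * ‖g w‖ ≤ 6 * ‖y‖ := le_of_mul_le_mul_left hgw hs0
    rw [norm_smul, ← hd]
    have hds : d = 2 * s := by rw [hs]; ring
    rw [hds]
    linarith
  -- removable singularity for `f1 z = (z - ξ₀) • g z`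
  set f1 : ℂ → Y := fun z => (z - ξ₀) • g z with hf1
  have hBsub : Metric.ball ξ₀ r₁ \ {ξ₀} ⊆ U \ {ξ₀} := diff_subset_diff_left hBU
  have hf1d : DifferentiableOn ℂ f1 (Metric.ball ξ₀ r₁ \ {ξ₀}) :=
    ((differentiable_id.sub_const ξ₀).differentiableOn).smul (hg.mono hBsub)
  have hf1b : BddAbove (norm ∘ f1 '' (Metric.ball ξ₀ r₁ \ {ξ₀})) := by
    refine ⟨12 * ‖y‖, ?_⟩
    rintro x ⟨z, hz, rfl⟩
    exact key z hz
  have hBnhds : Metric.ball ξ₀ r₁ ∈ 𝓝 ξ₀ := ball_mem_nhds _ hr₁0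
  have HF := Complex.differentiableOn_update_limUnder_of_bddAbove hBnhds hf1d hf1b
  set F := Function.update f1 ξ₀ (limUnder (𝓝[≠] ξ₀) f1) with hF
  have hFcont : ContinuousAt F ξ₀ := (HF.differentiableAt hBnhds).continuousAt
  have hFeq : ∀ z, z ≠ ξ₀ → F z = f1 z := fun z hz => Function.update_of_ne hz _ _
  -- radial limit forces F ξ₀ = 0
  have hmap : Tendsto (fun t : ℝ => (t : ℂ) * ξ₀) (𝓝[>] (1 : ℝ)) (𝓝 ξ₀) := by
    have h1 : Continuous (fun t : ℝ => (t : ℂ) * ξ₀) :=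
      Complex.continuous_ofReal.mul continuous_const
    have h2 : Tendsto (fun t : ℝ => (t : ℂ) * ξ₀) (𝓝 (1 : ℝ)) (𝓝 ξ₀) := by
      have := h1.tendsto (1 : ℝ)
      simpa using this
    exact h2.mono_left nhdsWithin_le_nhds
  have hFrad : Tendsto (fun t : ℝ => F ((t : ℂ) * ξ₀)) (𝓝[>] (1 : ℝ)) (𝓝 (F ξ₀)) :=
    hFcont.tendsto.comp hmap
  have hcong : (fun t : ℝ => F ((t : ℂ) * ξ₀)) =ᶠ[𝓝[>] (1 : ℝ)]
      (fun t : ℝ => ((t : ℂ) * ξ₀ - ξ₀) • g ((t : ℂ) * ξ₀)) := by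
    filter_upwards [self_mem_nhdsWithin] with t ht
    have htne : (t : ℂ) * ξ₀ ≠ ξ₀ := by
      intro h
      have h0 : ((t : ℂ) - 1) * ξ₀ = 0 := by linear_combination h
      rcases mul_eq_zero.1 h0 with h1 | h1
      · have ht1c : (t : ℂ) = 1 := sub_eq_zero.1 h1
        have ht1 : t = (1:ℝ) := by exact_mod_cast ht1c
        rw [ht1] at ht
        exact lt_irrefl _ (mem_Ioi.1 ht)
      · exact hξ0 h1
    rw [hFeq _ htne]
  have hF0 : F ξ₀ = 0 := tendsto_nhds_unique (hFrad.congr' hcong) herg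
  -- hence f1 → 0 on the punctured neighborhood
  have htend0 : Tendsto f1 (𝓝[≠] ξ₀) (𝓝 0) := by
    have h1 : Tendsto F (𝓝[≠] ξ₀) (𝓝 (F ξ₀)) := hFcont.tendsto.mono_left nhdsWithin_le_nhds
    rw [hF0] at h1
    apply h1.congr'
    filter_upwards [self_mem_nhdsWithin] with z hz
    exact hFeq z hz
  -- little-o condition for g
  have ho : (fun z => g z - g ξ₀) =o[𝓝[≠] ξ₀] fun z => (z - ξ₀)⁻¹ := by
    have hc : Tendsto (fun z : ℂ => (z - ξ₀) • g ξ₀) (𝓝[≠] ξ₀) (𝓝 0) := by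
      have hcc : Continuous (fun z : ℂ => (z - ξ₀) • g ξ₀) :=
        ((continuous_id.sub continuous_const).smul continuous_const)
      have h3 : Tendsto (fun z : ℂ => (z - ξ₀) • g ξ₀) (𝓝 ξ₀) (𝓝 0) := by
        have := hcc.tendsto ξ₀
        simpa using this
      exact h3.mono_left nhdsWithin_le_nhds
    have hT : Tendsto (fun z : ℂ => (z - ξ₀) • (g z - g ξ₀)) (𝓝[≠] ξ₀) (𝓝 0) := by
      have := htend0.sub hc
      simpa [smul_sub] using this
    rw [Asymptotics.isLittleO_iff]
    intro ε hε
    filter_upwards [hT (Metric.closedBall_mem_nhds (0 : Y) hε), self_mem_nhdsWithin]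
      with z hz1 hz2
    rw [Set.mem_preimage, mem_closedBall_zero_iff] at hz1
    have hzne : z ≠ ξ₀ := hz2
    have ht0 : (0:ℝ) < ‖z - ξ₀‖ := by
      rw [norm_pos_iff]; exact sub_ne_zero.2 hzne
    rw [norm_smul] at hz1
    rw [norm_inv]
    have heq : ε * ‖z - ξ₀‖⁻¹ = ε / ‖z - ξ₀‖ := by ring
    rw [heq, le_div_iff₀ ht0]
    calc ‖g z - g ξ₀‖ * ‖z - ξ₀‖ = ‖z - ξ₀‖ * ‖g z - g ξ₀‖ := by ring
      _ ≤ ε := hz1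
  have H := Complex.differentiableOn_update_limUnder_of_isLittleO (hU.mem_nhds hξU) hg ho
  exact ⟨_, H, fun l hl => Function.update_of_ne hl.2 _ _⟩
end

section
/- Let T be an invertible isometry of a complex Banach space Y and y ∈ Y with σ(y) ⊆ {1}, where σ(y) is the circular spectrum of y with respect to T (the set of unit circle points at which λ ↦ R(λ, T)y has no local analytic extension). Then σ(Ty − y) = ∅, i.e., the local resolvent λ ↦ R(λ, T)(Ty − y) extends analytically across the entire unit circle; consequently Ty − y = 0. -/
open Filter Topology Metric

noncomputable section

variable {Y : Type*} [NormedAddCommGroup Y] [NormedSpace ℂ Y]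

/-- The circular spectrum `σ(y)` of `y` with respect to a bounded operator `T` : the set
of points `ξ` of the unit circle `Γ` such that `λ ↦ R(λ, T) y` has no analytic extension
to any neighborhood of `ξ`. -/
def circularSpectrum (T : Y →L[ℂ] Y) (y : Y) : Set ℂ :=
  {ξ : ℂ | ‖ξ‖ = 1 ∧ ¬ ∃ U : Set ℂ, IsOpen U ∧ ξ ∈ U ∧ ∃ h : ℂ → Y,
    DifferentiableOn ℂ h U ∧ ∀ l ∈ U, ‖l‖ ≠ 1 → h l = resolvent T l y}

namespace KTProof

lemma norm_oneSub_inv_le {A : Type*} [NormedRing A] [CompleteSpace A] [NormOneClass A]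
    {t : A} (ht : ‖t‖ < 1) : ‖((Units.oneSub t ht)⁻¹ : Aˣ).val‖ ≤ (1 - ‖t‖)⁻¹ := by
  have h1 : ((Units.oneSub t ht)⁻¹ : Aˣ).val = ∑' n : ℕ, t ^ n := by
    rw [← NormedRing.inverse_one_sub t ht, ← geom_series_eq_inverse t ht]
  rw [h1]
  have h2 := tsum_geometric_le_of_norm_lt_one t ht
  simpa [norm_one] using h2

variable [CompleteSpace Y]

/-- The continuous linear map underlying an isometric equivalence. -/
abbrev clm (T : Y ≃ₗᵢ[ℂ] Y) : Y →L[ℂ] Y := T.toLinearIsometry.toContinuousLinearMap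

omit [CompleteSpace Y] in
lemma clm_apply (T : Y ≃ₗᵢ[ℂ] Y) (v : Y) : clm T v = T v := rfl

set_option maxHeartbeats 1000000 in
theorem isUnit_sub [Nontrivial Y] (T : Y ≃ₗᵢ[ℂ] Y) {lam : ℂ} (h : ‖lam‖ ≠ 1) :
    IsUnit (algebraMap ℂ (Y →L[ℂ] Y) lam - clm T) ∧
      ∀ z : Y, ‖resolvent (clm T) lam z‖ ≤ ‖z‖ / |‖lam‖ - 1| := by
  rcases lt_or_gt_of_ne h with hlt | hgt
  · -- inner case : abs lam < 1
    have hTS : clm T * clm T.symm = 1 := by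
      ext v; exact T.apply_symm_apply v
    have hST : clm T.symm * clm T = 1 := by
      ext v; exact T.symm_apply_apply v
    have hScle : ‖clm T.symm‖ ≤ 1 := T.symm.toLinearIsometry.norm_toContinuousLinearMap_le
    have hts : ‖lam • clm T.symm‖ ≤ ‖lam‖ := by
      calc ‖lam • clm T.symm‖ ≤ ‖lam‖ * ‖clm T.symm‖ := ContinuousLinearMap.opNorm_smul_le _ _
        _ ≤ ‖lam‖ * 1 := mul_le_mul_of_nonneg_left hScle (norm_nonneg _)
        _ = ‖lam‖ := by simp
    have ht : ‖lam • clm T.symm‖ < 1 := lt_of_le_of_lt hts hlt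
    set v : (Y →L[ℂ] Y)ˣ := Units.oneSub (lam • clm T.symm) ht with hvdef
    set ut : (Y →L[ℂ] Y)ˣ := ⟨clm T, clm T.symm, hTS, hST⟩ with hutdef
    have key : (-(ut * v) : (Y →L[ℂ] Y)ˣ).val = algebraMap ℂ (Y →L[ℂ] Y) lam - clm T := by
      have h1 : (ut * v).val = clm T - lam • (1 : Y →L[ℂ] Y) := by
        calc (ut * v).val = clm T * (1 - lam • clm T.symm) := rfl
          _ = clm T - lam • (clm T * clm T.symm) := by rw [mul_sub, mul_one, mul_smul_comm]
          _ = clm T - lam • (1 : Y →L[ℂ] Y) := by rw [hTS]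
      calc (-(ut * v) : (Y →L[ℂ] Y)ˣ).val = -((ut * v).val) := rfl
        _ = algebraMap ℂ (Y →L[ℂ] Y) lam - clm T := by
            rw [h1, neg_sub, Algebra.algebraMap_eq_smul_one]
    refine ⟨⟨-(ut * v), key⟩, ?_⟩
    intro z
    have hres : resolvent (clm T) lam = ((-(ut * v))⁻¹ : (Y →L[ℂ] Y)ˣ).val := by
      rw [resolvent, ← key, Ring.inverse_unit]
    have hinv : ((-(ut * v))⁻¹ : (Y →L[ℂ] Y)ˣ).val = -((v⁻¹ : (Y →L[ℂ] Y)ˣ).val * clm T.symm) :=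
      rfl
    have happ : resolvent (clm T) lam z = -((v⁻¹ : (Y →L[ℂ] Y)ˣ).val (clm T.symm z)) := by
      rw [hres, hinv]
      simp [ContinuousLinearMap.neg_apply, ContinuousLinearMap.mul_apply]
    rw [happ, norm_neg]
    have hbound := norm_oneSub_inv_le ht
    have hSz : ‖clm T.symm z‖ = ‖z‖ := T.symm.norm_map z
    have h1 : ‖(v⁻¹ : (Y →L[ℂ] Y)ˣ).val (clm T.symm z)‖ ≤ (1 - ‖lam • clm T.symm‖)⁻¹ * ‖z‖ := by
      calc ‖(v⁻¹ : (Y →L[ℂ] Y)ˣ).val (clm T.symm z)‖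
          ≤ ‖(v⁻¹ : (Y →L[ℂ] Y)ˣ).val‖ * ‖clm T.symm z‖ := ContinuousLinearMap.le_opNorm _ _
        _ ≤ (1 - ‖lam • clm T.symm‖)⁻¹ * ‖z‖ := by
            rw [hSz]; exact mul_le_mul_of_nonneg_right hbound (norm_nonneg _)
    refine h1.trans ?_
    have habs : |‖lam‖ - 1| = 1 - ‖lam‖ := by
      rw [abs_of_nonpos (by linarith)]; ring
    rw [habs, div_eq_inv_mul]
    have h2 : (1 - ‖lam • clm T.symm‖)⁻¹ ≤ (1 - ‖lam‖)⁻¹ :=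
      inv_anti₀ (by linarith) (by linarith)
    exact mul_le_mul_of_nonneg_right h2 (norm_nonneg _)
  · -- outer case : abs lam > 1
    have hl0 : lam ≠ 0 := by
      intro h0; rw [h0] at hgt; simp at hgt; linarith
    have hTle : ‖clm T‖ ≤ 1 := T.toLinearIsometry.norm_toContinuousLinearMap_le
    have habsinv : ‖lam⁻¹‖ = (‖lam‖)⁻¹ := by
      simp [norm_inv]
    have hapos : (0:ℝ) < ‖lam‖ := by linarith
    have hts : ‖lam⁻¹ • clm T‖ ≤ (‖lam‖)⁻¹ := by
      calc ‖lam⁻¹ • clm T‖ ≤ ‖lam⁻¹‖ * ‖clm T‖ := ContinuousLinearMap.opNorm_smul_le _ _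
        _ ≤ ‖lam⁻¹‖ * 1 := mul_le_mul_of_nonneg_left hTle (norm_nonneg _)
        _ = (‖lam‖)⁻¹ := by rw [mul_one, habsinv]
    have hinvlt : (‖lam‖)⁻¹ < 1 := by
      rw [inv_lt_one_iff₀]; right; exact hgt
    have ht : ‖lam⁻¹ • clm T‖ < 1 := lt_of_le_of_lt hts hinvlt
    set v : (Y →L[ℂ] Y)ˣ := Units.oneSub (lam⁻¹ • clm T) ht with hvdef
    set u : (Y →L[ℂ] Y)ˣ :=
      (Units.map (algebraMap ℂ (Y →L[ℂ] Y) : ℂ →* (Y →L[ℂ] Y))) (Units.mk0 lam hl0) with hudef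
    have key : ((u * v : (Y →L[ℂ] Y)ˣ) : Y →L[ℂ] Y) = algebraMap ℂ (Y →L[ℂ] Y) lam - clm T := by
      calc ((u * v : (Y →L[ℂ] Y)ˣ) : Y →L[ℂ] Y)
          = (algebraMap ℂ (Y →L[ℂ] Y) lam) * (1 - lam⁻¹ • clm T) := rfl
        _ = algebraMap ℂ (Y →L[ℂ] Y) lam - clm T := by
            rw [mul_sub, mul_one, ← Algebra.smul_def, smul_smul, mul_inv_cancel₀ hl0, one_smul]
    refine ⟨⟨u * v, key⟩, ?_⟩
    intro z
    have hres : resolvent (clm T) lam = (((u * v)⁻¹ : (Y →L[ℂ] Y)ˣ) : Y →L[ℂ] Y) := by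
      rw [resolvent, ← key, Ring.inverse_unit]
    have hinv : (((u * v)⁻¹ : (Y →L[ℂ] Y)ˣ) : Y →L[ℂ] Y)
        = (v⁻¹ : (Y →L[ℂ] Y)ˣ).val * algebraMap ℂ (Y →L[ℂ] Y) lam⁻¹ := rfl
    have happ : resolvent (clm T) lam z = (v⁻¹ : (Y →L[ℂ] Y)ˣ).val (lam⁻¹ • z) := by
      rw [hres, hinv]
      simp [ContinuousLinearMap.mul_apply, Algebra.algebraMap_eq_smul_one,
        ContinuousLinearMap.smul_apply, ContinuousLinearMap.one_apply]
    rw [happ]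
    have hbound := norm_oneSub_inv_le ht
    have hnn : (0:ℝ) ≤ (1 - ‖lam⁻¹ • clm T‖)⁻¹ := by
      have : (0:ℝ) < 1 - ‖lam⁻¹ • clm T‖ := by linarith
      positivity
    have h1 : ‖(v⁻¹ : (Y →L[ℂ] Y)ˣ).val (lam⁻¹ • z)‖
        ≤ (1 - ‖lam⁻¹ • clm T‖)⁻¹ * ((‖lam‖)⁻¹ * ‖z‖) := by
      calc ‖(v⁻¹ : (Y →L[ℂ] Y)ˣ).val (lam⁻¹ • z)‖
          ≤ ‖(v⁻¹ : (Y →L[ℂ] Y)ˣ).val‖ * ‖lam⁻¹ • z‖ := ContinuousLinearMap.le_opNorm _ _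
        _ ≤ (1 - ‖lam⁻¹ • clm T‖)⁻¹ * (‖lam⁻¹‖ * ‖z‖) := by
            have := norm_smul_le lam⁻¹ z
            exact mul_le_mul hbound this (norm_nonneg _) hnn
        _ = (1 - ‖lam⁻¹ • clm T‖)⁻¹ * ((‖lam‖)⁻¹ * ‖z‖) := by rw [habsinv]
    refine h1.trans ?_
    have h2 : (1 - ‖lam⁻¹ • clm T‖)⁻¹ ≤ (1 - (‖lam‖)⁻¹)⁻¹ :=
      inv_anti₀ (by linarith) (by linarith)
    have habs : |‖lam‖ - 1| = ‖lam‖ - 1 := abs_of_pos (by linarith)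
    rw [habs]
    have heq : (1 - (‖lam‖)⁻¹)⁻¹ * ((‖lam‖)⁻¹ * ‖z‖)
        = ‖z‖ / (‖lam‖ - 1) := by
      have ha1 : ‖lam‖ - 1 ≠ 0 := by linarith
      have ha0 : ‖lam‖ ≠ 0 := by linarith
      have ha2 : 1 - (‖lam‖)⁻¹ ≠ 0 := by
        have : (0:ℝ) < 1 - (‖lam‖)⁻¹ := by linarith
        linarith
      field_simp
    calc (1 - ‖lam⁻¹ • clm T‖)⁻¹ * ((‖lam‖)⁻¹ * ‖z‖)
        ≤ (1 - (‖lam‖)⁻¹)⁻¹ * ((‖lam‖)⁻¹ * ‖z‖) :=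
          mul_le_mul_of_nonneg_right h2 (by positivity)
      _ = ‖z‖ / (‖lam‖ - 1) := heq


theorem resolvent_identity [Nontrivial Y] (T : Y ≃ₗᵢ[ℂ] Y) {lam : ℂ}
    (h : ‖lam‖ ≠ 1) (y : Y) :
    resolvent (clm T) lam (clm T y - y) = (lam - 1) • resolvent (clm T) lam y - y := by
  have hu := (isUnit_sub T h).1
  have hcancel : resolvent (clm T) lam * (algebraMap ℂ (Y →L[ℂ] Y) lam - clm T) = 1 :=
    Ring.inverse_mul_cancel _ hu
  have hsplit : clm T y - y = (lam - 1) • y - (algebraMap ℂ (Y →L[ℂ] Y) lam - clm T) y := by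
    simp only [ContinuousLinearMap.sub_apply, Algebra.algebraMap_eq_smul_one,
      ContinuousLinearMap.smul_apply, ContinuousLinearMap.one_apply, sub_smul, one_smul]
    abel
  rw [hsplit, map_sub, map_smul]
  congr 1
  have := congrArg (fun (f : Y →L[ℂ] Y) => f y) hcancel
  simpa [ContinuousLinearMap.mul_apply] using this

theorem differentiableAt_res [Nontrivial Y] (T : Y ≃ₗᵢ[ℂ] Y) (z : Y) {lam : ℂ}
    (h : ‖lam‖ ≠ 1) :
    DifferentiableAt ℂ (fun l => resolvent (clm T) l z) lam := by
  have hmem : lam ∈ resolventSet ℂ (clm T) := (isUnit_sub T h).1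
  have hres : DifferentiableAt ℂ (resolvent (clm T)) lam :=
    (spectrum.hasDerivAt_resolvent hmem).differentiableAt
  exact hres.clm_apply (differentiableAt_const z)

omit [CompleteSpace Y] in
/-- Two local analytic extensions of the resolvent agree at a point of the unit circle. -/
theorem ext_agree [Nontrivial Y] (T : Y ≃ₗᵢ[ℂ] Y) (z : Y) {U₁ U₂ : Set ℂ}
    (h₁o : IsOpen U₁) (h₂o : IsOpen U₂) {g₁ g₂ : ℂ → Y}
    (h₁d : DifferentiableOn ℂ g₁ U₁) (h₂d : DifferentiableOn ℂ g₂ U₂)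
    (h₁e : ∀ l ∈ U₁, ‖l‖ ≠ 1 → g₁ l = resolvent (clm T) l z)
    (h₂e : ∀ l ∈ U₂, ‖l‖ ≠ 1 → g₂ l = resolvent (clm T) l z)
    {ξ : ℂ} (hξ₁ : ξ ∈ U₁) (hξ₂ : ξ ∈ U₂) (hξ : ‖ξ‖ = 1) : g₁ ξ = g₂ ξ := by
  set f : ℝ → ℂ := fun t => (1 + (t:ℂ)) * ξ with hfdef
  have hf0 : f 0 = ξ := by simp [hfdef]
  have hfc : Tendsto f (𝓝[>] (0:ℝ)) (𝓝 ξ) := by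
    have hcont : Continuous f := by continuity
    have := hcont.tendsto 0
    rw [hf0] at this
    exact this.mono_left nhdsWithin_le_nhds
  have habs : ∀ t : ℝ, 0 < t → ‖f t‖ ≠ 1 := by
    intro t ht
    have : ‖f t‖ = ‖1 + (t:ℂ)‖ * 1 := by
      rw [hfdef]; simp [norm_mul, hξ]
    rw [this, mul_one]
    have : ‖1 + (t:ℂ)‖ = 1 + t := by
      rw [show ((1:ℂ) + (t:ℂ)) = ((1 + t : ℝ) : ℂ) by push_cast; ring]
      rw [Complex.norm_real, Real.norm_eq_abs, abs_of_pos (by linarith)]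
    rw [this]; intro hc; linarith
  have hev : ∀ᶠ t in 𝓝[>] (0:ℝ), g₁ (f t) = g₂ (f t) := by
    have hU : U₁ ∩ U₂ ∈ 𝓝 ξ := (h₁o.inter h₂o).mem_nhds ⟨hξ₁, hξ₂⟩
    have hmem : ∀ᶠ t in 𝓝[>] (0:ℝ), f t ∈ U₁ ∩ U₂ := hfc.eventually_mem hU
    filter_upwards [hmem, self_mem_nhdsWithin] with t htm htp
    have habst := habs t htp
    rw [h₁e _ htm.1 habst, h₂e _ htm.2 habst]
  have h₁t : Tendsto (fun t => g₁ (f t)) (𝓝[>] (0:ℝ)) (𝓝 (g₁ ξ)) :=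
    ((h₁d.continuousOn.continuousAt (h₁o.mem_nhds hξ₁)).tendsto).comp hfc
  have h₂t : Tendsto (fun t => g₂ (f t)) (𝓝[>] (0:ℝ)) (𝓝 (g₂ ξ)) :=
    ((h₂d.continuousOn.continuousAt (h₂o.mem_nhds hξ₂)).tendsto).comp hfc
  exact tendsto_nhds_unique (h₁t.congr' hev) h₂t

/-- Gluing local extensions of the resolvent into a single function. -/
theorem glue [Nontrivial Y] (T : Y ≃ₗᵢ[ℂ] Y) (z : Y) (W : Set ℂ) (hW : IsOpen W)
    (hP : ∀ ξ ∈ W, ‖ξ‖ = 1 → ∃ U : Set ℂ, IsOpen U ∧ ξ ∈ U ∧ ∃ h : ℂ → Y,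
      DifferentiableOn ℂ h U ∧ ∀ l ∈ U, ‖l‖ ≠ 1 → h l = resolvent (clm T) l z) :
    ∃ G : ℂ → Y, (∀ lam, ‖lam‖ ≠ 1 → G lam = resolvent (clm T) lam z) ∧
      (∀ lam, ‖lam‖ ≠ 1 ∨ lam ∈ W → DifferentiableAt ℂ G lam) := by
  classical
  set P : ℂ → Prop := fun ξ => ∃ U : Set ℂ, IsOpen U ∧ ξ ∈ U ∧ ∃ h : ℂ → Y,
      DifferentiableOn ℂ h U ∧ ∀ l ∈ U, ‖l‖ ≠ 1 → h l = resolvent (clm T) l z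
    with hPdef
  set G : ℂ → Y := fun lam =>
    if hp : P lam then hp.choose_spec.2.2.choose lam else resolvent (clm T) lam z with hGdef
  have hGres : ∀ lam, ‖lam‖ ≠ 1 → G lam = resolvent (clm T) lam z := by
    intro lam hl
    by_cases hp : P lam
    · simp only [hGdef, dif_pos hp]
      exact hp.choose_spec.2.2.choose_spec.2 lam hp.choose_spec.2.1 hl
    · simp only [hGdef, dif_neg hp]
  refine ⟨G, hGres, ?_⟩
  have hopen : IsOpen {l : ℂ | ‖l‖ ≠ 1} := by
    have : {l : ℂ | ‖l‖ ≠ 1} = ((fun x : ℂ => ‖x‖) ⁻¹' {1})ᶜ := by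
      ext l; simp
    rw [this]
    exact (IsClosed.preimage continuous_norm isClosed_singleton).isOpen_compl
  intro lam₀ hcase
  by_cases habs₀ : ‖lam₀‖ = 1
  · -- on-circle point of W
    have hW₀ : lam₀ ∈ W := by
      rcases hcase with hc | hc
      · exact absurd habs₀ hc
      · exact hc
    obtain ⟨U, hUo, hUmem, hh, hhd, hhe⟩ := hP lam₀ hW₀ habs₀
    have hnhds : U ∩ W ∈ 𝓝 lam₀ := (hUo.inter hW).mem_nhds ⟨hUmem, hW₀⟩
    have hagree : ∀ l ∈ U ∩ W, G l = hh l := by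
      rintro l ⟨hlU, hlW⟩
      by_cases hab : ‖l‖ = 1
      · have hp : P l := hP l hlW hab
        have hchoice : G l = hp.choose_spec.2.2.choose l := by
          simp only [hGdef, dif_pos hp]
        rw [hchoice]
        exact ext_agree T z hp.choose_spec.1 hUo hp.choose_spec.2.2.choose_spec.1 hhd
          hp.choose_spec.2.2.choose_spec.2 hhe hp.choose_spec.2.1 hlU hab
      · rw [hGres l hab, hhe l hlU hab]
    have hdiff : DifferentiableAt ℂ hh lam₀ := hhd.differentiableAt (hUo.mem_nhds hUmem)
    exact hdiff.congr_of_eventuallyEq (Filter.eventuallyEq_of_mem hnhds hagree)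
  · -- off-circle point
    have hnhds : {l : ℂ | ‖l‖ ≠ 1} ∈ 𝓝 lam₀ := hopen.mem_nhds habs₀
    have hdiff : DifferentiableAt ℂ (fun l => resolvent (clm T) l z) lam₀ :=
      differentiableAt_res T z habs₀
    exact hdiff.congr_of_eventuallyEq (Filter.eventuallyEq_of_mem hnhds (fun l hl => hGres l hl))

lemma conj_eq_inv {w : ℂ} (hw : ‖w‖ = 1) : (starRingEnd ℂ) w = w⁻¹ := by
  have hw0 : w ≠ 0 := by intro h; rw [h] at hw; simp at hw
  have h1 : w * (starRingEnd ℂ) w = 1 := by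
    rw [Complex.mul_conj]
    norm_cast
    rw [← Complex.sq_norm, hw]; norm_num
  field_simp
  linear_combination h1

set_option maxHeartbeats 1000000 in
theorem cauchy_bound {g : ℂ → Y} {C : ℝ} (hC : 0 ≤ C)
    (hd : ∀ lam : ℂ, lam ≠ 1 → DifferentiableAt ℂ g lam)
    (hb : ∀ lam : ℂ, ‖lam‖ ≠ 1 → ‖g lam‖ ≤ C / |‖lam‖ - 1|)
    {l0 : ℂ} (h0 : l0 ≠ 1) (hnear : ‖l0 - 1‖ ≤ 1/4) :
    ‖g l0‖ ≤ 8 * C / ‖l0 - 1‖ := by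
  set d : ℝ := ‖l0 - 1‖ with hddef
  have hd0 : 0 < d := norm_pos_iff.mpr (sub_ne_zero.mpr h0)
  set s : ℝ := d / 2 with hsdef
  have hs : 0 < s := by positivity
  have hs8 : s ≤ 1/8 := by rw [hsdef]; linarith
  set r0 : ℝ := ‖l0‖ with hr0def
  have hr0low : 3/4 ≤ r0 := by
    have h1 : (1:ℝ) ≤ r0 + d := by
      calc (1:ℝ) = ‖l0 + (1 - l0)‖ := by norm_num
        _ ≤ ‖l0‖ + ‖1 - l0‖ := norm_add_le _ _
        _ = r0 + d := by rw [hr0def, hddef, norm_sub_rev]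
    linarith
  have hr0up : r0 ≤ 5/4 := by
    have h2 : ‖(1:ℂ)‖ = 1 := norm_one
    calc r0 = ‖1 + (l0 - 1)‖ := by rw [hr0def]; ring_nf
      _ ≤ ‖1‖ + ‖l0 - 1‖ := norm_add_le _ _
      _ ≤ 5/4 := by rw [h2, ← hddef]; linarith
  have hr0pos : 0 < r0 := by linarith
  have hr0C : (r0 : ℂ) ≠ 0 := Complex.ofReal_ne_zero.mpr (ne_of_gt hr0pos)
  have hl00 : l0 ≠ 0 := by
    intro h
    rw [hr0def, h] at hr0pos; simp at hr0pos
  set e : ℂ := l0 / (r0 : ℂ) with hedef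
  have he1 : ‖e‖ = 1 := by
    rw [hedef, norm_div, Complex.norm_real, Real.norm_eq_abs, abs_of_pos hr0pos, ← hr0def,
      div_self (ne_of_gt hr0pos)]
  have he0 : e ≠ 0 := by
    intro h; rw [h] at he1; simp at he1
  have hl0e : l0 = (r0 : ℂ) * e := by
    rw [hedef, mul_div_assoc']
    rw [mul_comm, mul_div_assoc, div_self hr0C, mul_one]
  set a : ℝ := r0^2 + s^2 - 1 with hadef
  set b : ℝ := 2 * s * r0 with hbdef
  have hbpos : 0 < b := by rw [hbdef]; positivity
  set c : ℝ := a / b with hcdef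
  have hcb : c * b = a := div_mul_cancel₀ a (ne_of_gt hbpos)
  obtain ⟨dd, hdd⟩ : ∃ dd : ℂ, dd * dd = (c:ℂ)^2 - 1 := by
    rcases eq_or_ne ((c:ℂ)^2 - 1) 0 with h | h
    · exact ⟨0, by rw [h]; ring⟩
    · refine ⟨((c:ℂ)^2 - 1) ^ (1/2 : ℂ), ?_⟩
      rw [← Complex.cpow_add _ _ h]
      norm_num
  set μ₁ : ℂ := -(c:ℂ) + dd with hμ₁def
  set μ₂ : ℂ := -(c:ℂ) - dd with hμ₂def
  have hprod : μ₁ * μ₂ = 1 := by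
    rw [hμ₁def, hμ₂def]; linear_combination -hdd
  have hsum : μ₁ + μ₂ = -2*(c:ℂ) := by rw [hμ₁def, hμ₂def]; ring
  set q₁ : ℂ := l0 + (s:ℂ) * e * μ₁ with hq₁def
  set q₂ : ℂ := l0 + (s:ℂ) * e * μ₂ with hq₂def
  set wf : ℂ → ℂ := fun lam => (lam - q₁) * (lam - q₂) with hwfdef
  have hne1 : ∀ lam ∈ closedBall l0 s, lam ≠ 1 := by
    intro lam hlam
    have h1 : dist lam l0 ≤ s := mem_closedBall.mp hlam
    have h2 : dist l0 1 = d := by rw [Complex.dist_eq, ← hddef]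
    have h3 : dist lam 1 > 0 := by
      have h5 := dist_triangle l0 lam 1
      have h4 : dist l0 lam = dist lam l0 := dist_comm _ _
      rw [hsdef] at h1; linarith
    exact fun h => by rw [h] at h3; simp at h3
  have hfd : DifferentiableOn ℂ (fun lam => wf lam • g lam) (closedBall l0 s) := by
    intro lam hlam
    exact (((differentiableAt_id.sub_const q₁).mul (differentiableAt_id.sub_const q₂)).smul
      (hd lam (hne1 lam hlam))).differentiableWithinAt
  have key := hfd.circleIntegral_sub_inv_smul (mem_ball_self hs)
  have hsb : ∀ lam ∈ sphere l0 s, ‖(lam - l0)⁻¹ • (wf lam • g lam)‖ ≤ 4 * C := by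
    intro lam hlam
    have hν : ‖lam - l0‖ = s := by
      have h6 := mem_sphere.mp hlam
      rwa [Complex.dist_eq] at h6
    set u : ℂ := (lam - l0) / ((s:ℂ) * e) with hudef
    have hsC : ((s:ℂ)) ≠ 0 := Complex.ofReal_ne_zero.mpr (ne_of_gt hs)
    have hse0 : ((s:ℂ) * e) ≠ 0 := mul_ne_zero hsC he0
    have hu1 : ‖u‖ = 1 := by
      rw [hudef, norm_div, norm_mul, Complex.norm_real, Real.norm_eq_abs, abs_of_pos hs, he1, hν]
      field_simp
    have hu0 : u ≠ 0 := by intro h; rw [h] at hu1; simp at hu1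
    have hlam_eq : lam = l0 + (s:ℂ) * e * u := by
      rw [hudef]; field_simp; ring
    set v : ℂ := u⁻¹ with hvdef
    have huv : u * v = 1 := mul_inv_cancel₀ hu0
    have hv1 : ‖v‖ = 1 := by rw [hvdef, norm_inv, hu1]; norm_num
    set f : ℂ := e⁻¹ with hfdef2
    have hef : e * f = 1 := mul_inv_cancel₀ he0
    have hw1 : wf lam = ((s:ℂ) * e)^2 * ((u - μ₁) * (u - μ₂)) := by
      simp only [hwfdef, hq₁def, hq₂def]
      rw [hlam_eq]
      ring
    have hconj : (starRingEnd ℂ) lam = (r0:ℂ) * f + (s:ℂ) * f * v := by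
      nth_rewrite 1 [hlam_eq, hl0e]
      rw [map_add, map_mul, map_mul, map_mul]
      rw [Complex.conj_ofReal, Complex.conj_ofReal, conj_eq_inv he1, conj_eq_inv hu1]
    have habs2 : ((‖lam‖)^2 : ℂ) - 1 = (a:ℂ) + (s:ℂ) * (r0:ℂ) * (u + v) := by
      have h1 : (((‖lam‖))^2 : ℂ) = lam * (starRingEnd ℂ) lam := by
        rw [Complex.mul_conj, ← Complex.sq_norm]
        norm_cast
      rw [h1, hconj]
      nth_rewrite 1 [hlam_eq]
      rw [hl0e, hadef]
      push_cast
      linear_combination ((r0:ℂ)^2 + (s:ℂ)*(r0:ℂ)*(u+v) + (s:ℂ)^2*u*v) * hef + ((s:ℂ))^2 * huv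
    have hfact : (a:ℂ) + (s:ℂ) * (r0:ℂ) * (u + v)
        = ((s:ℂ) * (r0:ℂ)) * v * ((u - μ₁) * (u - μ₂)) := by
      have hexp : (u - μ₁) * (u - μ₂) = u^2 + 2*(c:ℂ)*u + 1 := by
        linear_combination hprod - u * hsum
      rw [hexp]
      have hcb' : (c:ℂ) * (2 * (s:ℂ) * (r0:ℂ)) = (a:ℂ) := by
        rw [← hcb, hbdef]
        push_cast
        ring
      linear_combination (-((s:ℂ)*(r0:ℂ)*u) - 2*(s:ℂ)*(r0:ℂ)*(c:ℂ)) * huv - hcb'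
    have habsfact : ‖wf lam‖ = (s / r0) * |(‖lam‖)^2 - 1| := by
      have h1 : ‖wf lam‖ = s^2 * ‖(u - μ₁) * (u - μ₂)‖ := by
        rw [hw1, norm_mul, norm_pow, norm_mul, Complex.norm_real, Real.norm_eq_abs, abs_of_pos hs, he1, mul_one]
      have h2 : ‖(a:ℂ) + (s:ℂ) * (r0:ℂ) * (u + v)‖
          = (s * r0) * ‖(u - μ₁) * (u - μ₂)‖ := by
        rw [hfact, norm_mul, norm_mul, norm_mul, Complex.norm_real, Real.norm_eq_abs, Complex.norm_real, Real.norm_eq_abs,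
          hv1, abs_of_pos hs, abs_of_pos hr0pos]
        ring
      have h3 : |(‖lam‖)^2 - 1|
          = ‖(a:ℂ) + (s:ℂ) * (r0:ℂ) * (u + v)‖ := by
        calc |(‖lam‖)^2 - 1|
            = ‖((((‖lam‖)^2 - 1 : ℝ)) : ℂ)‖ := ((Complex.norm_real _).trans (Real.norm_eq_abs _)).symm
          _ = ‖((‖lam‖)^2 : ℂ) - 1‖ := by norm_cast
          _ = ‖(a:ℂ) + (s:ℂ) * (r0:ℂ) * (u + v)‖ := by rw [habs2]
      rw [h1, h3, h2]
      field_simp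
    -- now the numeric estimate
    rw [norm_smul, norm_smul]
    have hn1 : ‖(lam - l0)⁻¹‖ = s⁻¹ := by
      rw [norm_inv, hν]
    have hn2 : ‖wf lam‖ = ‖wf lam‖ := rfl
    rw [hn1, hn2]
    by_cases habsl : ‖lam‖ = 1
    · rw [habsfact, habsl]
      simp
      positivity
    · have hgb := hb lam habsl
      have hfac : |(‖lam‖)^2 - 1| = |‖lam‖ - 1| * (‖lam‖ + 1) := by
        have h7 : (‖lam‖)^2 - 1 = (‖lam‖ - 1) * (‖lam‖ + 1) := by
          ring
        have h8 : (0:ℝ) < ‖lam‖ + 1 := by positivity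
        rw [h7, abs_mul, abs_of_pos h8]
      have habs_up : ‖lam‖ ≤ 3/2 := by
        calc ‖lam‖ = ‖l0 + (lam - l0)‖ := by ring_nf
          _ ≤ ‖l0‖ + ‖lam - l0‖ := norm_add_le _ _
          _ = r0 + s := by rw [← hr0def, hν]
          _ ≤ 3/2 := by linarith
      have habs1 : (0:ℝ) < |‖lam‖ - 1| :=
        abs_pos.mpr (sub_ne_zero.mpr habsl)
      have hstep : ‖wf lam‖ * ‖g lam‖
          ≤ (s / r0) * (|‖lam‖ - 1| * (‖lam‖ + 1)) * (C / |‖lam‖ - 1|) := by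
        rw [habsfact, hfac]
        have hnn : (0:ℝ) ≤ (s / r0) * (|‖lam‖ - 1| * (‖lam‖ + 1)) := by
          positivity
        exact mul_le_mul_of_nonneg_left hgb hnn
      have hq : (s / r0) * (|‖lam‖ - 1| * (‖lam‖ + 1)) * (C / |‖lam‖ - 1|)
          = (s * ((‖lam‖ + 1) * C)) / r0 := by
        field_simp [ne_of_gt habs1]
      have hr : (s * ((‖lam‖ + 1) * C)) / r0 ≤ s * (4 * C) := by
        rw [div_le_iff₀ hr0pos]
        have h1 : (‖lam‖ + 1) * C ≤ (5/2) * C := by nlinarith [habs_up, hC]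
        have h2 : (5/2:ℝ) * C ≤ 4 * C * r0 := by nlinarith [hC, hr0low]
        calc s * ((‖lam‖ + 1) * C) ≤ s * (4 * C * r0) :=
              mul_le_mul_of_nonneg_left (h1.trans h2) hs.le
          _ = s * (4 * C) * r0 := by ring
      have hfin : ‖wf lam‖ * ‖g lam‖ ≤ s * (4 * C) := by
        calc ‖wf lam‖ * ‖g lam‖
            ≤ (s / r0) * (|‖lam‖ - 1| * (‖lam‖ + 1)) * (C / |‖lam‖ - 1|) := hstep
          _ = (s * ((‖lam‖ + 1) * C)) / r0 := hq
          _ ≤ s * (4 * C) := hr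
      calc s⁻¹ * (‖wf lam‖ * ‖g lam‖) ≤ s⁻¹ * (s * (4 * C)) := by
            exact mul_le_mul_of_nonneg_left hfin (by positivity)
        _ = 4 * C := by field_simp
  -- assemble
  have hInt : ‖∮ z in C(l0, s), (z - l0)⁻¹ • (wf z • g z)‖ ≤ 2 * Real.pi * s * (4 * C) :=
    circleIntegral.norm_integral_le_of_norm_le_const hs.le hsb
  rw [key] at hInt
  have hI : ‖(2 * (Real.pi:ℂ) * Complex.I : ℂ)‖ = 2 * Real.pi := by
    rw [norm_mul, norm_mul, Complex.norm_I, Complex.norm_two,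
      Complex.norm_real, Real.norm_eq_abs, abs_of_pos Real.pi_pos, mul_one]
  have hW : ‖wf l0‖ = s^2 := by
    have h9 : wf l0 = ((s:ℂ) * e)^2 := by
      rw [hwfdef, hq₁def, hq₂def]
      linear_combination ((s:ℂ)*e)^2 * hprod
    rw [h9, norm_pow, norm_mul, Complex.norm_real, Real.norm_eq_abs, abs_of_pos hs, he1,
      mul_one]
  rw [norm_smul, norm_smul, hI, hW] at hInt
  have h5 : s^2 * ‖g l0‖ ≤ s * (4 * C) := by nlinarith [Real.pi_pos]
  have h6 : ‖g l0‖ ≤ 4 * C / s := by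
    rw [le_div_iff₀ hs]
    nlinarith [hs, norm_nonneg (g l0)]
  have h7 : 8 * C / d = 4 * C / s := by
    rw [hsdef]; field_simp; ring
  rw [h7]
  exact h6


end KTProof

set_option maxHeartbeats 1000000 in
/-- Katznelson–Tsafriri type theorem for invertible isometries: if `T` is an invertible
isometry of a complex Banach space `Y` and `y ∈ Y` has circular spectrum `σ(y) ⊆ {1}`,
then `σ(Ty - y) = ∅`, i.e. the local resolvent `λ ↦ R(λ, T)(Ty - y)` extends
analytically across the entire unit circle; consequently `Ty - y = 0`. -/
theorem spectrum_in_one_implies_fixed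
    [CompleteSpace Y] (T : Y ≃ₗᵢ[ℂ] Y) (y : Y)
    (hspec : circularSpectrum T.toLinearIsometry.toContinuousLinearMap y ⊆ {1}) :
    circularSpectrum T.toLinearIsometry.toContinuousLinearMap (T y - y) = ∅ ∧
    T y - y = 0 := by
  rcases subsingleton_or_nontrivial Y with hY | hY
  · constructor
    · ext ξ
      simp only [circularSpectrum, Set.mem_setOf_eq, Set.mem_empty_iff_false, iff_false,
        not_and, not_not]
      intro _
      exact ⟨Set.univ, isOpen_univ, Set.mem_univ ξ, fun _ => 0,
        differentiableOn_const 0, fun l _ _ => Subsingleton.elim _ _⟩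
    · exact Subsingleton.elim _ _
  · set z : Y := T y - y with hzdef
    have hzz : KTProof.clm T y - y = z := rfl
    -- Step A : analytic extension of the local resolvent of `z` at every circle point
    have hext : ∀ ξ : ℂ, ‖ξ‖ = 1 → ∃ U : Set ℂ, IsOpen U ∧ ξ ∈ U ∧ ∃ h : ℂ → Y,
        DifferentiableOn ℂ h U ∧ ∀ l ∈ U, ‖l‖ ≠ 1 →
          h l = resolvent (KTProof.clm T) l z := by
      intro ξ hξ
      by_cases hξ1 : ξ = 1
      · -- the hard case: ξ = 1
        have hW : IsOpen ({1}ᶜ : Set ℂ) := isOpen_compl_singleton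
        have hP : ∀ ζ ∈ ({1}ᶜ : Set ℂ), ‖ζ‖ = 1 → ∃ U : Set ℂ, IsOpen U ∧ ζ ∈ U ∧
            ∃ h : ℂ → Y, DifferentiableOn ℂ h U ∧ ∀ l ∈ U, ‖l‖ ≠ 1 →
              h l = resolvent (KTProof.clm T) l y := by
          intro ζ hζW hζ
          have hnot : ζ ∉ circularSpectrum (KTProof.clm T) y := fun hmem => hζW (hspec hmem)
          rw [circularSpectrum, Set.mem_setOf_eq] at hnot
          by_contra hno
          exact hnot ⟨hζ, hno⟩
        obtain ⟨G, hGres, hGdiff⟩ := KTProof.glue T y {1}ᶜ hW hP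
        have hGd : ∀ lam : ℂ, lam ≠ 1 → DifferentiableAt ℂ G lam := fun lam hlam =>
          hGdiff lam (Or.inr hlam)
        have hGb : ∀ lam : ℂ, ‖lam‖ ≠ 1 → ‖G lam‖ ≤ ‖y‖ / |‖lam‖ - 1| := by
          intro lam hlam
          rw [hGres lam hlam]
          exact (KTProof.isUnit_sub T hlam).2 y
        set F : ℂ → Y := fun lam => (lam - 1) • G lam with hFdef
        have hFd : DifferentiableOn ℂ F (ball (1:ℂ) (1/4) \ {1}) := by
          intro lam hlam
          have hlam1 : lam ≠ 1 := fun h => hlam.2 (Set.mem_singleton_iff.mpr h)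
          exact ((differentiableAt_id.sub_const 1).smul (hGd lam hlam1)).differentiableWithinAt
        have hFb : ∀ lam ∈ ball (1:ℂ) (1/4) \ {1}, ‖F lam‖ ≤ 8 * ‖y‖ := by
          intro lam hlam
          have hlam1 : lam ≠ 1 := fun h => hlam.2 (Set.mem_singleton_iff.mpr h)
          have hd14 : ‖lam - 1‖ < 1/4 := by
            have h := mem_ball.mp hlam.1
            rwa [Complex.dist_eq] at h
          have hKB := KTProof.cauchy_bound (norm_nonneg y) hGd hGb hlam1 (le_of_lt hd14)
          have habs0 : 0 < ‖lam - 1‖ := norm_pos_iff.mpr (sub_ne_zero.mpr hlam1)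
          calc ‖F lam‖ = ‖lam - 1‖ * ‖G lam‖ := by
                rw [hFdef, norm_smul]
            _ ≤ ‖lam - 1‖ * (8 * ‖y‖ / ‖lam - 1‖) :=
                mul_le_mul_of_nonneg_left hKB habs0.le
            _ = 8 * ‖y‖ := by field_simp
        have hbdd : BddAbove (norm ∘ F '' (ball (1:ℂ) (1/4) \ {1})) := by
          refine ⟨8 * ‖y‖, ?_⟩
          rintro x ⟨lam, hlam, rfl⟩
          exact hFb lam hlam
        have hnhds : ball (1:ℂ) (1/4) ∈ 𝓝 (1:ℂ) := ball_mem_nhds _ (by norm_num)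
        have hFt := Complex.differentiableOn_update_limUnder_of_bddAbove hnhds hFd hbdd
        refine ⟨ball (1:ℂ) (1/4), isOpen_ball, by rw [hξ1]; exact mem_ball_self (by norm_num),
          fun l => Function.update F 1 (limUnder (𝓝[≠] (1:ℂ)) F) l - y, hFt.sub_const y, ?_⟩
        intro l hl hlabs
        have hl1 : l ≠ 1 := by
          intro h; rw [h] at hlabs; simp at hlabs
        show Function.update F 1 (limUnder (𝓝[≠] (1:ℂ)) F) l - y = resolvent (KTProof.clm T) l z
        rw [Function.update_of_ne hl1]
        have hFl : F l = (l - 1) • G l := rfl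
        rw [hFl, hGres l hlabs]
        exact (KTProof.resolvent_identity T hlabs y).symm
      · -- the easy case: ξ ≠ 1
        have hnot : ξ ∉ circularSpectrum (KTProof.clm T) y := fun hmem => hξ1 (hspec hmem)
        rw [circularSpectrum, Set.mem_setOf_eq] at hnot
        have hPξ : ∃ U : Set ℂ, IsOpen U ∧ ξ ∈ U ∧ ∃ h : ℂ → Y, DifferentiableOn ℂ h U ∧
            ∀ l ∈ U, ‖l‖ ≠ 1 → h l = resolvent (KTProof.clm T) l y := by
          by_contra hno
          exact hnot ⟨hξ, hno⟩
        obtain ⟨U, hUo, hUm, hy, hyd, hye⟩ := hPξ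
        refine ⟨U, hUo, hUm, fun l => (l - 1) • hy l - y, ?_, ?_⟩
        · exact ((differentiableOn_id.sub_const 1).smul hyd).sub_const y
        · intro l hl hlabs
          show (l - 1) • hy l - y = resolvent (KTProof.clm T) l z
          rw [hye l hl hlabs]
          exact (KTProof.resolvent_identity T hlabs y).symm
    have hempty : circularSpectrum (KTProof.clm T) z = ∅ := by
      ext ξ
      simp only [circularSpectrum, Set.mem_setOf_eq, Set.mem_empty_iff_false, iff_false,
        not_and, not_not]
      intro hξ
      exact hext ξ hξ
    refine ⟨hempty, ?_⟩
    -- Step B : Liouville argument to conclude z = 0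
    obtain ⟨G, hGres, hGdiff⟩ := KTProof.glue T z Set.univ isOpen_univ
      (fun ξ _ hξ => hext ξ hξ)
    have hdiffG : Differentiable ℂ G := fun lam => hGdiff lam (Or.inr (Set.mem_univ lam))
    have hGb : ∀ lam : ℂ, ‖lam‖ ≠ 1 → ‖G lam‖ ≤ ‖z‖ / |‖lam‖ - 1| := by
      intro lam hlam
      rw [hGres lam hlam]
      exact (KTProof.isUnit_sub T hlam).2 z
    obtain ⟨M, hM⟩ := (isCompact_closedBall (0:ℂ) 2).exists_bound_of_continuousOn
      hdiffG.continuous.continuousOn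
    have hrange : ∀ w : ℂ, ‖G w‖ ≤ max M ‖z‖ := by
      intro w
      by_cases hw : ‖w‖ ≤ 2
      · refine le_max_iff.mpr (Or.inl (hM w ?_))
        rwa [mem_closedBall, Complex.dist_eq, sub_zero]
      · push_neg at hw
        have hwabs : ‖w‖ ≠ 1 := by intro h; rw [h] at hw; norm_num at hw
        have h1 : |‖w‖ - 1| = ‖w‖ - 1 := abs_of_pos (by linarith)
        have h2 := hGb w hwabs
        rw [h1] at h2
        have h3 : ‖z‖ / (‖w‖ - 1) ≤ ‖z‖ := div_le_self (norm_nonneg z) (by linarith)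
        exact le_max_iff.mpr (Or.inr (h2.trans h3))
    have hbound : Bornology.IsBounded (Set.range G) := by
      rw [isBounded_iff_forall_norm_le]
      exact ⟨max M ‖z‖, by rintro x ⟨w, rfl⟩; exact hrange w⟩
    have hconst := hdiffG.apply_eq_apply_of_bounded hbound
    have habs2' : ‖(2:ℂ)‖ ≠ 1 := by
      rw [Complex.norm_two]; norm_num
    have hG2 : G 2 = 0 := by
      by_contra hne
      have hpos : 0 < ‖G 2‖ := norm_pos_iff.mpr hne
      obtain ⟨n, hn⟩ := exists_nat_gt (‖z‖ / ‖G 2‖)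
      have hnabs : ‖(n:ℂ) + 2‖ = (n:ℝ) + 2 := by
        rw [show ((n:ℂ) + 2 : ℂ) = (((n:ℝ) + 2 : ℝ) : ℂ) by push_cast; ring,
          Complex.norm_real, Real.norm_eq_abs]
        have hn0 : (0:ℝ) ≤ (n:ℝ) := n.cast_nonneg
        exact abs_of_nonneg (by linarith)
      have hne1 : ‖(n:ℂ) + 2‖ ≠ 1 := by
        rw [hnabs]
        have : (0:ℝ) ≤ (n:ℝ) := n.cast_nonneg
        intro h; linarith
      have hb2 := hGb ((n:ℂ) + 2) hne1
      rw [hnabs] at hb2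
      have heq : |(n:ℝ) + 2 - 1| = (n:ℝ) + 1 := by
        have hn0 : (0:ℝ) ≤ (n:ℝ) := n.cast_nonneg
        rw [abs_of_nonneg (by linarith)]; ring
      rw [heq] at hb2
      rw [← hconst 2 ((n:ℂ) + 2)] at hb2
      have hdiv : ‖z‖ < (n:ℝ) * ‖G 2‖ := (div_lt_iff₀ hpos).mp hn
      have hmul := (le_div_iff₀ (by positivity : (0:ℝ) < (n:ℝ) + 1)).mp hb2
      nlinarith [hpos, hdiv, hmul]
    have hres2 : resolvent (KTProof.clm T) (2:ℂ) z = 0 := by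
      exact (hGres 2 habs2').symm.trans hG2
    have hu := (KTProof.isUnit_sub T habs2').1
    have hcan : (algebraMap ℂ (Y →L[ℂ] Y) 2 - KTProof.clm T) * resolvent (KTProof.clm T) (2:ℂ) = 1 :=
      Ring.mul_inverse_cancel _ hu
    have happ := congrArg (fun f : Y →L[ℂ] Y => f z) hcan
    simp only [ContinuousLinearMap.mul_apply, ContinuousLinearMap.one_apply] at happ
    rw [hres2, map_zero] at happ
    exact happ.symm

end
end
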